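/- arXiv:0905.2078 — 3 statements merged into one kernel-verified Lean document; each statement's English description precedes it below -/
import Mathlib

section
/- Let λ^ε minimize λ ↦ P(ℓ∘f_λ) + ε·Σ λ_j log λ_j over Λ and let λ̂^ε minimize λ ↦ Pₙ(ℓ∘f_λ) + ε·Σ λ_j log λ_j over Λ. Then P((ℓ'∘f_{λ̂^ε}) − (ℓ'∘f_{λ^ε}))·(f_{λ̂^ε} − f_{λ^ε}) + ε·K(λ̂^ε, λ^ε) ≤ (P − Pₙ)((ℓ'∘f_{λ̂^ε})·(f_{λ̂^ε} − f_{λ^ε})), where K(λ,ν) := Σ_{j=1}^N (log(λ_j/ν_j))·(λ_j − ν_j) is the symmetrized Kullback–Leibler divergence. -/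
open MeasureTheory Real Finset
open scoped BigOperators

namespace EntropySparse

def simplex (N : ℕ) : Set (Fin N → ℝ) := {l | (∀ j, 0 ≤ l j) ∧ ∑ j, l j = 1}

noncomputable def fcomb {S : Type*} {N : ℕ} (h : Fin N → S → ℝ) (l : Fin N → ℝ) (x : S) : ℝ :=
  ∑ j, l j * h j x

noncomputable def risk {S T : Type*} [MeasurableSpace S] [MeasurableSpace T]
    (P : Measure (S × T)) (ℓ : T → ℝ → ℝ) (f : S → ℝ) : ℝ :=
  ∫ p, ℓ p.2 (f p.1) ∂P

structure NiceLoss {T : Type*} (ℓ ℓd ℓdd : T → ℝ → ℝ) : Prop where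
  nonneg : ∀ y u, 0 ≤ ℓ y u
  convex : ∀ y, ConvexOn ℝ Set.univ (ℓ y)
  hderiv : ∀ y u, HasDerivAt (ℓ y) (ℓd y u) u
  hderiv2 : ∀ y u, HasDerivAt (ℓd y) (ℓdd y u) u
  bdd2 : ∃ B, ∀ y u, |ℓdd y u| ≤ B
  bdd0 : ∃ B, ∀ y, ℓ y 0 ≤ B
  bddd0 : ∃ B, ∀ y, |ℓd y 0| ≤ B

section Helpers

variable {S T : Type*} [MeasurableSpace S] [MeasurableSpace T]
variable {ℓ ℓd ℓdd : T → ℝ → ℝ}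

lemma ld_lip (hloss : NiceLoss ℓ ℓd ℓdd) {B2 : ℝ} (hB2 : ∀ y u, |ℓdd y u| ≤ B2)
    (y : T) (u v : ℝ) : |ℓd y u - ℓd y v| ≤ B2 * |u - v| := by
  have := (convex_univ (𝕜 := ℝ) (E := ℝ)).norm_image_sub_le_of_norm_hasDerivWithin_le
    (f := ℓd y) (f' := ℓdd y) (C := B2)
    (fun x _ => (hloss.hderiv2 y x).hasDerivWithinAt)
    (fun x _ => by simpa [Real.norm_eq_abs] using hB2 y x)
    (Set.mem_univ v) (Set.mem_univ u)
  simpa [Real.norm_eq_abs] using this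

lemma ld_bound (hloss : NiceLoss ℓ ℓd ℓdd) {B1 B2 : ℝ}
    (hB1 : ∀ y, |ℓd y 0| ≤ B1) (hB2 : ∀ y u, |ℓdd y u| ≤ B2)
    (y : T) (u : ℝ) : |ℓd y u| ≤ B1 + B2 * |u| := by
  have h1 := ld_lip hloss hB2 y u 0
  have h2 := hB1 y
  have : |ℓd y u| ≤ |ℓd y u - ℓd y 0| + |ℓd y 0| := by
    calc |ℓd y u| = |(ℓd y u - ℓd y 0) + ℓd y 0| := by ring_nf
    _ ≤ _ := abs_add_le _ _
  simp only [sub_zero] at h1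
  linarith

lemma l_lip (hloss : NiceLoss ℓ ℓd ℓdd) {B1 B2 : ℝ}
    (hB1 : ∀ y, |ℓd y 0| ≤ B1) (hB2 : ∀ y u, |ℓdd y u| ≤ B2)
    (y : T) {r u v : ℝ} (hu : |u| ≤ r) (hv : |v| ≤ r) :
    |ℓ y u - ℓ y v| ≤ (B1 + B2 * r) * |u - v| := by
  have := (convex_Icc (-r) r).norm_image_sub_le_of_norm_hasDerivWithin_le
    (f := ℓ y) (f' := ℓd y) (C := B1 + B2 * r)
    (fun x _ => (hloss.hderiv y x).hasDerivWithinAt)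
    (fun x hx => by
      have hxr : |x| ≤ r := abs_le.2 ⟨hx.1, hx.2⟩
      have := ld_bound hloss hB1 hB2 y x
      have hb2 : 0 ≤ B2 := le_trans (abs_nonneg _) (hB2 y 0)
      simp only [Real.norm_eq_abs]
      nlinarith)
    (abs_le.1 hv |>.1 |> fun h1 => ⟨h1, (abs_le.1 hv).2⟩)
    ⟨(abs_le.1 hu).1, (abs_le.1 hu).2⟩
  simpa [Real.norm_eq_abs] using this

lemma fcomb_meas {N : ℕ} (h : Fin N → S → ℝ) (hhm : ∀ j, Measurable (h j))
    (l : Fin N → ℝ) : Measurable (fcomb h l) := by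
  unfold fcomb
  exact Finset.measurable_sum _ fun j _ => (hhm j).const_mul _

lemma fcomb_bound {N : ℕ} {h : Fin N → S → ℝ} (hhb : ∀ j x, |h j x| ≤ 1)
    {l : Fin N → ℝ} (hl : l ∈ simplex N) (x : S) : |fcomb h l x| ≤ 1 := by
  calc |fcomb h l x| ≤ ∑ j, |l j * h j x| := Finset.abs_sum_le_sum_abs _ _
  _ ≤ ∑ j, l j := by
      refine Finset.sum_le_sum fun j _ => ?_
      rw [abs_mul, abs_of_nonneg (hl.1 j)]
      calc l j * |h j x| ≤ l j * 1 := by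
            exact mul_le_mul_of_nonneg_left (hhb j x) (hl.1 j)
      _ = l j := mul_one _
  _ = 1 := hl.2

lemma fcomb_line {N : ℕ} (h : Fin N → S → ℝ) (a b : Fin N → ℝ) (t : ℝ) (x : S) :
    fcomb h (fun j => a j + t * (b j - a j)) x
      = fcomb h a x + t * (fcomb h b x - fcomb h a x) := by
  simp only [fcomb, add_mul, sub_mul, mul_sub, Finset.sum_add_distrib, Finset.sum_sub_distrib,
    Finset.mul_sum]
  ring_nf

lemma meas_ld (hloss : NiceLoss ℓ ℓd ℓdd)
    (hmeas : Measurable fun p : T × ℝ => ℓ p.1 p.2) :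
    Measurable fun p : T × ℝ => ℓd p.1 p.2 := by
  apply measurable_of_tendsto_metrizable
    (f := fun n (p : T × ℝ) => (ℓ p.1 (p.2 + ((n : ℝ) + 1)⁻¹) - ℓ p.1 p.2) * ((n : ℝ) + 1))
  · intro n
    exact ((hmeas.comp (measurable_fst.prodMk (measurable_snd.add_const _))).sub
      hmeas).mul_const _
  · rw [tendsto_pi_nhds]
    intro p
    have hd := (hloss.hderiv p.1 p.2)
    have hslope := hasDerivAt_iff_tendsto_slope.1 hd
    have hseq : Filter.Tendsto (fun n : ℕ => p.2 + ((n : ℝ) + 1)⁻¹) Filter.atTop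
        (nhds p.2) := by
      have : Filter.Tendsto (fun n : ℕ => ((n : ℝ) + 1)⁻¹) Filter.atTop (nhds 0) := by
        simpa only [one_div] using (tendsto_one_div_add_atTop_nhds_zero_nat :
          Filter.Tendsto (fun n : ℕ => 1 / ((n : ℝ) + 1)) Filter.atTop (nhds 0))
      simpa using (tendsto_const_nhds.add this)
    have hseq' : Filter.Tendsto (fun n : ℕ => p.2 + ((n : ℝ) + 1)⁻¹) Filter.atTop
        (nhdsWithin p.2 {x | x ≠ p.2}) := by
      apply tendsto_nhdsWithin_of_tendsto_nhds_of_eventually_within _ hseq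
      filter_upwards with n
      have hpos : (0 : ℝ) < ((n : ℝ) + 1)⁻¹ := by positivity
      show p.2 + ((n : ℝ) + 1)⁻¹ ≠ p.2
      exact ne_of_gt (by linarith)
    have := hslope.comp hseq'
    convert this using 2 with n
    simp only [Function.comp_def, slope_def_field, add_sub_cancel_left]
    rw [div_eq_mul_inv, inv_inv]

lemma integrable_of_bound {α : Type*} [MeasurableSpace α] (Q : Measure α)
    [IsProbabilityMeasure Q] {g : α → ℝ} (hg : Measurable g) {C : ℝ}
    (hC : ∀ a, |g a| ≤ C) : Integrable g Q :=
  (integrable_const C).mono' hg.aestronglyMeasurable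
    (Filter.Eventually.of_forall (by simpa [Real.norm_eq_abs] using hC))


lemma risk_hasDeriv (hloss : NiceLoss ℓ ℓd ℓdd)
    (hmeas : Measurable fun p : T × ℝ => ℓ p.1 p.2)
    (Q : Measure (S × T)) [IsProbabilityMeasure Q]
    {f0 Δ : S → ℝ} (hf0m : Measurable f0) (hΔm : Measurable Δ)
    (hf0b : ∀ x, |f0 x| ≤ 1) (hΔb : ∀ x, |Δ x| ≤ 2) :
    HasDerivAt (fun t => ∫ p, ℓ p.2 (f0 p.1 + t * Δ p.1) ∂Q)
      (∫ p, ℓd p.2 (f0 p.1) * Δ p.1 ∂Q) 0 := by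
  obtain ⟨B2', hB2'⟩ := hloss.bdd2
  obtain ⟨B0', hB0'⟩ := hloss.bdd0
  obtain ⟨B1', hB1'⟩ := hloss.bddd0
  set B2 := max B2' 0 with hB2def
  set B1 := max B1' 0 with hB1def
  set B0 := max B0' 0 with hB0def
  have hB2 : ∀ y u, |ℓdd y u| ≤ B2 := fun y u => (hB2' y u).trans (le_max_left _ _)
  have hB1 : ∀ y, |ℓd y 0| ≤ B1 := fun y => (hB1' y).trans (le_max_left _ _)
  have hB0 : ∀ y, ℓ y 0 ≤ B0 := fun y => (hB0' y).trans (le_max_left _ _)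
  have hB2n : 0 ≤ B2 := le_max_right _ _
  have hB1n : 0 ≤ B1 := le_max_right _ _
  have hB0n : 0 ≤ B0 := le_max_right _ _
  have hldb : ∀ (y : T) (u : ℝ), |u| ≤ 3 → |ℓd y u| ≤ B1 + B2 * 3 := by
    intro y u hu
    have := ld_bound hloss hB1 hB2 y u
    nlinarith
  have hlb : ∀ (y : T) (u : ℝ), |u| ≤ 3 → |ℓ y u| ≤ B0 + (B1 + B2 * 3) * 3 := by
    intro y u hu
    have h1 := l_lip hloss hB1 hB2 y (r := 3) (v := 0) hu (by norm_num)
    have h2 := hB0 y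
    have h3 := hloss.nonneg y u
    rw [abs_of_nonneg h3]
    have : ℓ y u - ℓ y 0 ≤ |ℓ y u - ℓ y 0| := le_abs_self _
    simp only [sub_zero] at h1
    nlinarith [abs_nonneg u]
  have hmF : ∀ t : ℝ, Measurable fun p : S × T => ℓ p.2 (f0 p.1 + t * Δ p.1) := by
    intro t
    exact hmeas.comp (measurable_snd.prodMk
      (((hf0m.comp measurable_fst)).add ((hΔm.comp measurable_fst).const_mul t)))
  have hmF' : Measurable fun p : S × T => ℓd p.2 (f0 p.1 + (0:ℝ) * Δ p.1) * Δ p.1 := by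
    exact ((meas_ld hloss hmeas).comp (measurable_snd.prodMk
      (((hf0m.comp measurable_fst)).add ((hΔm.comp measurable_fst).const_mul 0)))).mul
      (hΔm.comp measurable_fst)
  have hub : ∀ (p : S × T) (t : ℝ), |t| < 1 → |f0 p.1 + t * Δ p.1| ≤ 3 := by
    intro p t ht
    have h1 := hf0b p.1
    have h2 := hΔb p.1
    calc |f0 p.1 + t * Δ p.1| ≤ |f0 p.1| + |t * Δ p.1| := abs_add_le _ _
    _ ≤ 1 + |t| * |Δ p.1| := by rw [abs_mul]; gcongr
    _ ≤ 1 + 1 * 2 := by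
          have ht' := le_of_lt ht
          gcongr
    _ = 3 := by norm_num
  have key := hasDerivAt_integral_of_dominated_loc_of_deriv_le (𝕜 := ℝ) (μ := Q)
    (x₀ := (0:ℝ)) (Metric.ball_mem_nhds (0:ℝ) one_pos)
    (F := fun t p => ℓ p.2 (f0 p.1 + t * Δ p.1))
    (F' := fun t p => ℓd p.2 (f0 p.1 + t * Δ p.1) * Δ p.1)
    (bound := fun _ => (B1 + B2 * 3) * 2)
    (Filter.Eventually.of_forall fun t => (hmF t).aestronglyMeasurable)
    (integrable_of_bound Q (hmF 0) (C := B0 + (B1 + B2 * 3) * 3) (fun p => by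
      apply hlb
      have := hub p 0 (by norm_num)
      simpa using this))
    hmF'.aestronglyMeasurable
    (Filter.Eventually.of_forall fun p => by
      intro t ht
      rw [Metric.mem_ball, dist_zero_right, Real.norm_eq_abs] at ht
      have h1 := hldb p.2 _ (hub p t ht)
      have h2 := hΔb p.1
      rw [Real.norm_eq_abs, abs_mul]
      show |ℓd p.2 (f0 p.1 + t * Δ p.1)| * |Δ p.1| ≤ (B1 + B2 * 3) * 2
      exact mul_le_mul h1 h2 (abs_nonneg _) (le_trans (abs_nonneg _) h1))
    (integrable_const _)
    (Filter.Eventually.of_forall fun p => by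
      intro t _
      have hinner : HasDerivAt (fun s : ℝ => f0 p.1 + s * Δ p.1) (Δ p.1) t := by
        simpa using ((hasDerivAt_id t).mul_const (Δ p.1)).const_add (f0 p.1)
      have houter := hloss.hderiv p.2 (f0 p.1 + t * Δ p.1)
      simpa [Function.comp_def] using houter.comp t hinner)
  have := key.2
  simpa using this

lemma entropy_hasDeriv {N : ℕ} (μ ν : Fin N → ℝ) (hsupp : ∀ j, μ j = 0 → ν j = 0) :
    HasDerivAt
      (fun t => ∑ j, (μ j + t * (ν j - μ j)) * Real.log (μ j + t * (ν j - μ j)))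
      (∑ j, (Real.log (μ j) + 1) * (ν j - μ j)) 0 := by
  apply HasDerivAt.fun_sum
  intro j _
  by_cases hj : μ j = 0
  · have hν := hsupp j hj
    simpa [hj, hν] using hasDerivAt_const (0:ℝ) (0:ℝ)
  · have hinner : HasDerivAt (fun t : ℝ => μ j + t * (ν j - μ j)) (ν j - μ j) 0 := by
      simpa using ((hasDerivAt_id (0:ℝ)).mul_const (ν j - μ j)).const_add (μ j)
    have houter : HasDerivAt (fun x : ℝ => x * Real.log x) (Real.log (μ j) + 1)
        (μ j + 0 * (ν j - μ j)) := by
      simpa using Real.hasDerivAt_mul_log hj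
    simpa [Function.comp_def] using houter.comp 0 hinner

lemma foc (hloss : NiceLoss ℓ ℓd ℓdd)
    (hmeas : Measurable fun p : T × ℝ => ℓ p.1 p.2)
    (Q : Measure (S × T)) [IsProbabilityMeasure Q]
    {N : ℕ} (h : Fin N → S → ℝ) (hhm : ∀ j, Measurable (h j)) (hhb : ∀ j x, |h j x| ≤ 1)
    (ε : ℝ)
    (μ ν : Fin N → ℝ) (hμ : μ ∈ simplex N) (hν : ν ∈ simplex N)
    (hmin : IsMinOn
      (fun l : Fin N → ℝ => risk Q ℓ (fcomb h l) + ε * ∑ j, l j * Real.log (l j))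
      (simplex N) μ)
    (hsupp : ε = 0 ∨ ∀ j, μ j = 0 → ν j = 0) :
    0 ≤ (∫ p, ℓd p.2 (fcomb h μ p.1) * (fcomb h ν p.1 - fcomb h μ p.1) ∂Q)
      + ε * ∑ j, (Real.log (μ j) + 1) * (ν j - μ j) := by
  set f0 : S → ℝ := fcomb h μ with hf0
  set Δ : S → ℝ := fun x => fcomb h ν x - fcomb h μ x with hΔ
  have hf0m : Measurable f0 := fcomb_meas h hhm μ
  have hΔm : Measurable Δ := (fcomb_meas h hhm ν).sub (fcomb_meas h hhm μ)
  have hf0b : ∀ x, |f0 x| ≤ 1 := fun x => fcomb_bound hhb hμ x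
  have hΔb : ∀ x, |Δ x| ≤ 2 := by
    intro x
    have h1 := fcomb_bound hhb hν x
    have h2 := fcomb_bound hhb hμ x
    calc |Δ x| ≤ |fcomb h ν x| + |fcomb h μ x| := abs_sub _ _
    _ ≤ 2 := by linarith
  have hR : HasDerivAt (fun t => ∫ p, ℓ p.2 (f0 p.1 + t * Δ p.1) ∂Q)
      (∫ p, ℓd p.2 (f0 p.1) * Δ p.1 ∂Q) 0 :=
    risk_hasDeriv hloss hmeas Q hf0m hΔm hf0b hΔb
  have hεE : HasDerivAt
      (fun t => ε * ∑ j, (μ j + t * (ν j - μ j)) * Real.log (μ j + t * (ν j - μ j)))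
      (ε * ∑ j, (Real.log (μ j) + 1) * (ν j - μ j)) 0 := by
    rcases hsupp with h0 | hs
    · subst h0
      simpa using hasDerivAt_const (0:ℝ) (0:ℝ)
    · exact (entropy_hasDeriv μ ν hs).const_mul ε
  set φ : ℝ → ℝ := fun t =>
    (∫ p, ℓ p.2 (f0 p.1 + t * Δ p.1) ∂Q)
      + ε * ∑ j, (μ j + t * (ν j - μ j)) * Real.log (μ j + t * (ν j - μ j)) with hφdef
  have hφ : HasDerivAt φ
      ((∫ p, ℓd p.2 (f0 p.1) * Δ p.1 ∂Q)
        + ε * ∑ j, (Real.log (μ j) + 1) * (ν j - μ j)) 0 := hR.add hεE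
  -- φ t = objective at the curve point
  have hφG : ∀ t : ℝ, φ t = risk Q ℓ (fcomb h (fun j => μ j + t * (ν j - μ j)))
      + ε * ∑ j, (μ j + t * (ν j - μ j)) * Real.log (μ j + t * (ν j - μ j)) := by
    intro t
    simp only [hφdef, risk]
    congr 1
    apply integral_congr_ae
    filter_upwards with p
    rw [fcomb_line]
  have hkey : ∀ t ∈ Set.Ioc (0:ℝ) 1, 0 ≤ slope φ 0 t := by
    intro t ht
    have hct : (fun j => μ j + t * (ν j - μ j)) ∈ simplex N := by
      constructor
      · intro j
        have h1 := hμ.1 j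
        have h2 := hν.1 j
        show 0 ≤ μ j + t * (ν j - μ j)
        nlinarith [mul_nonneg ht.1.le h2, mul_nonneg (sub_nonneg.2 ht.2) h1]
      · have : ∑ j, (μ j + t * (ν j - μ j)) = ∑ j, μ j + t * (∑ j, ν j - ∑ j, μ j) := by
          rw [Finset.sum_add_distrib, ← Finset.mul_sum, Finset.sum_sub_distrib]
        rw [this, hμ.2, hν.2]
        ring
    have hmin' := hmin hct
    have h0 : φ 0 = risk Q ℓ (fcomb h μ) + ε * ∑ j, μ j * Real.log (μ j) := by
      rw [hφG 0]; simp
    have ht' : φ t = risk Q ℓ (fcomb h (fun j => μ j + t * (ν j - μ j)))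
        + ε * ∑ j, (μ j + t * (ν j - μ j)) * Real.log (μ j + t * (ν j - μ j)) := hφG t
    rw [slope_def_field]
    apply div_nonneg _ (by linarith [ht.1] : (0:ℝ) ≤ t - 0)
    simp only [Set.mem_setOf_eq] at hmin'
    rw [sub_nonneg, h0, ht']
    exact hmin'
  have hlim := hasDerivAt_iff_tendsto_slope.1 hφ
  have hlim' : Filter.Tendsto (slope φ 0) (nhdsWithin 0 (Set.Ioi 0))
      (nhds ((∫ p, ℓd p.2 (f0 p.1) * Δ p.1 ∂Q)
        + ε * ∑ j, (Real.log (μ j) + 1) * (ν j - μ j))) :=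
    hlim.mono_left (nhdsWithin_mono 0 (fun x hx => ne_of_gt hx))
  exact ge_of_tendsto hlim'
    (Filter.eventually_of_mem (Ioc_mem_nhdsGT one_pos) hkey)


lemma mul_log_diff_le {a x : ℝ} (ha : 0 ≤ a) (hx : 0 < x) :
    x * Real.log x - a * Real.log a ≤ (x - a) * (Real.log x + 1) := by
  rcases eq_or_lt_of_le ha with h | h
  · rw [← h]
    simp only [zero_mul, Real.log_zero, mul_zero, sub_zero]
    nlinarith [hx.le]
  · have hd : (0:ℝ) < x / a := by positivity
    have hlog := Real.log_le_sub_one_of_pos hd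
    rw [Real.log_div (ne_of_gt hx) (ne_of_gt h)] at hlog
    have h2 : a * (Real.log x - Real.log a) ≤ a * (x / a - 1) :=
      mul_le_mul_of_nonneg_left hlog h.le
    have h3 : a * (x / a - 1) = x - a := by field_simp
    nlinarith [h2, h3]

lemma entropy_term_bound {a d t : ℝ} (ha0 : 0 ≤ a) (ha1 : a ≤ 1)
    (had : 0 ≤ a + d) (had1 : a + d ≤ 1) (ht0 : 0 < t) (ht : t ≤ 1/2) :
    (a + t * d) * Real.log (a + t * d) - a * Real.log a
      ≤ t * (|d| * (|Real.log (a/2)| + Real.log 2 + 1)) := by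
  have hlog2 : (0:ℝ) ≤ Real.log 2 := Real.log_nonneg one_le_two
  rcases lt_trichotomy d 0 with hd | hd | hd
  · -- d < 0
    have hapos : 0 < a := by linarith
    have hxlo : a/2 ≤ a + t * d := by nlinarith [mul_nonneg (by linarith : (0:ℝ) ≤ 1/2 - t) (by linarith : (0:ℝ) ≤ -d)]
    have hxpos : 0 < a + t * d := lt_of_lt_of_le (by positivity) hxlo
    have hxhi : a + t * d ≤ 1 := by nlinarith
    have key := mul_log_diff_le ha0 hxpos
    have hlx_le : Real.log (a + t * d) ≤ 0 := Real.log_nonpos hxpos.le hxhi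
    have hlx_ge : Real.log (a/2) ≤ Real.log (a + t * d) :=
      Real.log_le_log (by positivity) hxlo
    have hla2 : Real.log (a/2) ≤ 0 := Real.log_nonpos (by positivity) (by linarith)
    have habs : |Real.log (a + t * d)| ≤ |Real.log (a/2)| := by
      rw [abs_of_nonpos hlx_le, abs_of_nonpos hla2]
      linarith
    have h5 : |(a + t * d - a) * (Real.log (a + t * d) + 1)|
        ≤ t * |d| * (|Real.log (a/2)| + 1) := by
      rw [show a + t * d - a = t * d by ring, abs_mul, abs_mul, abs_of_pos ht0]
      have h6 : |Real.log (a + t * d) + 1| ≤ |Real.log (a/2)| + 1 :=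
        le_trans (abs_add_le _ _) (by simp; linarith)
      have : (0:ℝ) ≤ t * |d| := by positivity
      exact mul_le_mul_of_nonneg_left h6 this
    have h7 := le_abs_self ((a + t * d - a) * (Real.log (a + t * d) + 1))
    nlinarith [mul_nonneg (mul_nonneg ht0.le (abs_nonneg d)) hlog2]
  · -- d = 0
    subst hd
    simp
  · -- d > 0
    have hxpos : 0 < a + t * d := by nlinarith
    have hxhi : a + t * d ≤ 1 := by nlinarith
    have key := mul_log_diff_le ha0 hxpos
    have hlx_le : Real.log (a + t * d) ≤ 0 := Real.log_nonpos hxpos.le hxhi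
    have h8 : (a + t * d - a) * (Real.log (a + t * d) + 1) ≤ t * d := by
      rw [show a + t * d - a = t * d by ring]
      nlinarith [mul_pos ht0 hd]
    have hda : |d| = d := abs_of_pos hd
    nlinarith [mul_nonneg (mul_nonneg ht0.le hd.le)
      (add_nonneg (abs_nonneg (Real.log (a/2))) hlog2)]

lemma curve_mem {N : ℕ} {μ ν : Fin N → ℝ} (hμ : μ ∈ simplex N) (hν : ν ∈ simplex N)
    {t : ℝ} (h0 : 0 ≤ t) (h1 : t ≤ 1) :
    (fun j => μ j + t * (ν j - μ j)) ∈ simplex N := by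
  constructor
  · intro j
    have h1' := hμ.1 j
    have h2 := hν.1 j
    show 0 ≤ μ j + t * (ν j - μ j)
    nlinarith [mul_nonneg h0 h2, mul_nonneg (sub_nonneg.2 h1) h1']
  · have : ∑ j, (μ j + t * (ν j - μ j)) = ∑ j, μ j + t * (∑ j, ν j - ∑ j, μ j) := by
      rw [Finset.sum_add_distrib, ← Finset.mul_sum, Finset.sum_sub_distrib]
    rw [this, hμ.2, hν.2]
    ring

set_option maxHeartbeats 1000000 in
lemma support_lemma (hloss : NiceLoss ℓ ℓd ℓdd)
    (hmeas : Measurable fun p : T × ℝ => ℓ p.1 p.2)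
    (Q : Measure (S × T)) [IsProbabilityMeasure Q]
    {N : ℕ} (h : Fin N → S → ℝ) (hhm : ∀ j, Measurable (h j)) (hhb : ∀ j x, |h j x| ≤ 1)
    {ε : ℝ} (hε : 0 < ε)
    (μ ν : Fin N → ℝ) (hμ : μ ∈ simplex N) (hν : ν ∈ simplex N)
    (hmin : IsMinOn
      (fun l : Fin N → ℝ => risk Q ℓ (fcomb h l) + ε * ∑ j, l j * Real.log (l j))
      (simplex N) μ)
    (k : Fin N) (hk0 : μ k = 0) (hkpos : 0 < ν k) : False := by
  obtain ⟨B2', hB2'⟩ := hloss.bdd2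
  obtain ⟨B1', hB1'⟩ := hloss.bddd0
  obtain ⟨B0', hB0'⟩ := hloss.bdd0
  set B2 := max B2' 0 with hB2def
  set B1 := max B1' 0 with hB1def
  set B0 := max B0' 0 with hB0def
  have hB2 : ∀ y u, |ℓdd y u| ≤ B2 := fun y u => (hB2' y u).trans (le_max_left _ _)
  have hB1 : ∀ y, |ℓd y 0| ≤ B1 := fun y => (hB1' y).trans (le_max_left _ _)
  have hB0 : ∀ y, ℓ y 0 ≤ B0 := fun y => (hB0' y).trans (le_max_left _ _)
  have hB2n : 0 ≤ B2 := le_max_right _ _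
  have hB1n : 0 ≤ B1 := le_max_right _ _
  have hB0n : 0 ≤ B0 := le_max_right _ _
  set M : ℝ := (B1 + B2 * 3) * 2 with hMdef
  have hMn : 0 ≤ M := by positivity
  set f0 : S → ℝ := fcomb h μ with hf0
  set Δ : S → ℝ := fun x => fcomb h ν x - fcomb h μ x with hΔdef
  have hf0m : Measurable f0 := fcomb_meas h hhm μ
  have hΔm : Measurable Δ := (fcomb_meas h hhm ν).sub (fcomb_meas h hhm μ)
  have hf0b : ∀ x, |f0 x| ≤ 1 := fun x => fcomb_bound hhb hμ x
  have hΔb : ∀ x, |Δ x| ≤ 2 := by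
    intro x
    have h1 := fcomb_bound hhb hν x
    have h2 := fcomb_bound hhb hμ x
    calc |Δ x| ≤ |fcomb h ν x| + |fcomb h μ x| := abs_sub _ _
    _ ≤ 2 := by linarith
  set C : ℝ := ∑ j, |ν j - μ j| * (|Real.log (μ j / 2)| + Real.log 2 + 1) with hCdef
  have hlog2 : (0:ℝ) ≤ Real.log 2 := Real.log_nonneg one_le_two
  have hCn : 0 ≤ C := Finset.sum_nonneg fun j _ => by positivity
  set X : ℝ := M + ε * C + 1 with hXdef
  obtain ⟨t, ht0, ht2, hlogb⟩ : ∃ t : ℝ, 0 < t ∧ t ≤ 1/2 ∧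
      Real.log (t * ν k) ≤ -X / (ε * ν k) := by
    refine ⟨min (1/2) (Real.exp (-X / (ε * ν k)) / ν k),
      lt_min (by norm_num) (by positivity), min_le_left _ _, ?_⟩
    have ht0' : (0:ℝ) < min (1/2) (Real.exp (-X / (ε * ν k)) / ν k) :=
      lt_min (by norm_num) (by positivity)
    rw [Real.log_le_iff_le_exp (by positivity)]
    calc min (1/2) (Real.exp (-X / (ε * ν k)) / ν k) * ν k
        ≤ Real.exp (-X / (ε * ν k)) / ν k * ν k :=
          mul_le_mul_of_nonneg_right (min_le_right _ _) hkpos.le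
      _ = Real.exp (-X / (ε * ν k)) := div_mul_cancel₀ _ (ne_of_gt hkpos)
  have ht1 : t ≤ 1 := by linarith
  set c : Fin N → ℝ := fun j => μ j + t * (ν j - μ j) with hcdef
  have hc : c ∈ simplex N := curve_mem hμ hν ht0.le ht1
  have hmin' := hmin hc
  simp only [Set.mem_setOf_eq] at hmin'
  -- risk bound
  have hub : ∀ (p : S × T) (s : ℝ), |s| ≤ 1 → |f0 p.1 + s * Δ p.1| ≤ 3 := by
    intro p s hs
    have h1 := hf0b p.1
    have h2 := hΔb p.1
    calc |f0 p.1 + s * Δ p.1| ≤ |f0 p.1| + |s * Δ p.1| := abs_add_le _ _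
    _ ≤ 1 + |s| * |Δ p.1| := by rw [abs_mul]; gcongr
    _ ≤ 1 + 1 * 2 := by gcongr
    _ = 3 := by norm_num
  have hlb : ∀ (y : T) (u : ℝ), |u| ≤ 3 → |ℓ y u| ≤ B0 + (B1 + B2 * 3) * 3 := by
    intro y u hu
    have h1 := l_lip hloss hB1 hB2 y (r := 3) (v := 0) hu (by norm_num)
    have h3 := hloss.nonneg y u
    have h4 := hB0 y
    simp only [sub_zero] at h1
    rw [abs_of_nonneg h3]
    have h5 : ℓ y u - ℓ y 0 ≤ |ℓ y u - ℓ y 0| := le_abs_self _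
    nlinarith [abs_nonneg u]
  have hmF : ∀ s : ℝ, Measurable fun p : S × T => ℓ p.2 (f0 p.1 + s * Δ p.1) := fun s =>
    hmeas.comp (measurable_snd.prodMk
      ((hf0m.comp measurable_fst).add ((hΔm.comp measurable_fst).const_mul s)))
  have hIt : Integrable (fun p : S × T => ℓ p.2 (f0 p.1 + t * Δ p.1)) Q :=
    integrable_of_bound Q (hmF t)
      (fun p => hlb _ _ (hub p t (by rw [abs_of_pos ht0]; linarith)))
  have hI0 : Integrable (fun p : S × T => ℓ p.2 (f0 p.1)) Q := by
    have := integrable_of_bound Q (hmF 0)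
      (fun p => hlb _ _ (hub p 0 (by norm_num)))
    simpa using this
  have hriskc : risk Q ℓ (fcomb h c) = ∫ p, ℓ p.2 (f0 p.1 + t * Δ p.1) ∂Q := by
    unfold risk
    apply integral_congr_ae
    filter_upwards with p
    congr 1
    exact fcomb_line h μ ν t p.1
  have hriskdiff : risk Q ℓ (fcomb h c) - risk Q ℓ (fcomb h μ) ≤ M * t := by
    have hrisk0 : risk Q ℓ (fcomb h μ) = ∫ p, ℓ p.2 (f0 p.1) ∂Q := rfl
    rw [hriskc, hrisk0, ← integral_sub hIt hI0]
    have hpt : ∀ p : S × T,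
        ℓ p.2 (f0 p.1 + t * Δ p.1) - ℓ p.2 (f0 p.1) ≤ M * t := by
      intro p
      have hu3 : |f0 p.1 + t * Δ p.1| ≤ 3 := hub p t (by rw [abs_of_pos ht0]; linarith)
      have hv3 : |f0 p.1| ≤ 3 := le_trans (hf0b p.1) (by norm_num)
      have h1 := l_lip hloss hB1 hB2 p.2 (r := 3) hu3 hv3
      have h2 : |f0 p.1 + t * Δ p.1 - f0 p.1| ≤ t * 2 := by
        rw [show f0 p.1 + t * Δ p.1 - f0 p.1 = t * Δ p.1 by ring, abs_mul, abs_of_pos ht0]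
        nlinarith [hΔb p.1]
      have h5 := le_abs_self (ℓ p.2 (f0 p.1 + t * Δ p.1) - ℓ p.2 (f0 p.1))
      nlinarith [mul_le_mul_of_nonneg_left h2
        (by positivity : (0:ℝ) ≤ B1 + B2 * 3)]
    calc ∫ p, (ℓ p.2 (f0 p.1 + t * Δ p.1) - ℓ p.2 (f0 p.1)) ∂Q
        ≤ ∫ _p, M * t ∂Q := integral_mono (hIt.sub hI0) (integrable_const _) hpt
      _ = M * t := by simp
  have hent : (∑ j, c j * Real.log (c j)) - ∑ j, μ j * Real.log (μ j)
      ≤ t * (ν k * Real.log (t * ν k)) + t * C := by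
    rw [← Finset.sum_sub_distrib]
    rw [Finset.sum_eq_sum_sdiff_singleton_add (Finset.mem_univ k)
      (fun j => c j * Real.log (c j) - μ j * Real.log (μ j))]
    have hck : c k = t * ν k := by
      show μ k + t * (ν k - μ k) = t * ν k
      rw [hk0]; ring
    have hkterm : c k * Real.log (c k) - μ k * Real.log (μ k)
        = t * (ν k * Real.log (t * ν k)) := by
      rw [hck, hk0]; ring
    have hμle1 : ∀ j, μ j ≤ 1 := by
      intro j
      rw [← hμ.2]
      exact Finset.single_le_sum (fun i _ => hμ.1 i) (Finset.mem_univ j)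
    have hνle1 : ∀ j, ν j ≤ 1 := by
      intro j
      rw [← hν.2]
      exact Finset.single_le_sum (fun i _ => hν.1 i) (Finset.mem_univ j)
    have hrest : ∀ j ∈ Finset.univ \ ({k} : Finset (Fin N)),
        c j * Real.log (c j) - μ j * Real.log (μ j)
          ≤ t * (|ν j - μ j| * (|Real.log (μ j / 2)| + Real.log 2 + 1)) := by
      intro j _
      exact entropy_term_bound (hμ.1 j) (hμle1 j)
        (by linarith [hν.1 j] : (0:ℝ) ≤ μ j + (ν j - μ j))
        (by linarith [hνle1 j] : μ j + (ν j - μ j) ≤ 1) ht0 ht2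
    have hsum1 : ∑ j ∈ Finset.univ \ ({k} : Finset (Fin N)),
        (c j * Real.log (c j) - μ j * Real.log (μ j))
        ≤ ∑ j ∈ Finset.univ \ ({k} : Finset (Fin N)),
          t * (|ν j - μ j| * (|Real.log (μ j / 2)| + Real.log 2 + 1)) :=
      Finset.sum_le_sum hrest
    have hsum2 : ∑ j ∈ Finset.univ \ ({k} : Finset (Fin N)),
        t * (|ν j - μ j| * (|Real.log (μ j / 2)| + Real.log 2 + 1)) ≤ t * C := by
      rw [hCdef, ← Finset.mul_sum]
      apply mul_le_mul_of_nonneg_left _ ht0.le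
      apply Finset.sum_le_sum_of_subset_of_nonneg (Finset.sdiff_subset)
      intro j _ _
      positivity
    rw [hkterm]
    linarith
  -- combine all bounds
  have hcomb : 0 ≤ M * t + ε * (t * (ν k * Real.log (t * ν k)) + t * C) := by
    have h1 := mul_le_mul_of_nonneg_left hent hε.le
    linarith
  have hfin : ε * (t * (ν k * Real.log (t * ν k))) ≤ -(t * X) := by
    have h1 : (0:ℝ) ≤ ε * t * ν k := by positivity
    have h2 := mul_le_mul_of_nonneg_left hlogb h1
    have heq : ε * t * ν k * (-X / (ε * ν k)) = -(t * X) := by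
      field_simp
    nlinarith [h2, heq]
  have hfinal : (0:ℝ) ≤ -t := by
    have hX : X = M + ε * C + 1 := hXdef
    nlinarith [hcomb, hfin]
  linarith

end Helpers

/-- Subtracting the necessary conditions of the two entropy-penalized minimization
problems (3.1) and (3.2) yields the basic inequality (3.4). -/
theorem statement13 {S T : Type*} [MeasurableSpace S] [MeasurableSpace T]
    (ℓ ℓd ℓdd : T → ℝ → ℝ) (hloss : NiceLoss ℓ ℓd ℓdd)
    (hmeas : Measurable fun p : T × ℝ => ℓ p.1 p.2)
    (P Pn : Measure (S × T)) [IsProbabilityMeasure P] [IsProbabilityMeasure Pn]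
    {N : ℕ} (h : Fin N → S → ℝ) (hhm : ∀ j, Measurable (h j)) (hhb : ∀ j x, |h j x| ≤ 1)
    (ε : ℝ) (hε : 0 ≤ ε)
    (lamEps : Fin N → ℝ) (hEps : lamEps ∈ simplex N)
    (hEpsMin : IsMinOn
      (fun l : Fin N → ℝ => risk P ℓ (fcomb h l) + ε * ∑ j, l j * Real.log (l j))
      (simplex N) lamEps)
    (lamHat : Fin N → ℝ) (hHat : lamHat ∈ simplex N)
    (hHatMin : IsMinOn
      (fun l : Fin N → ℝ => risk Pn ℓ (fcomb h l) + ε * ∑ j, l j * Real.log (l j))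
      (simplex N) lamHat) :
    (∫ p, (ℓd p.2 (fcomb h lamHat p.1) - ℓd p.2 (fcomb h lamEps p.1))
        * (fcomb h lamHat p.1 - fcomb h lamEps p.1) ∂P)
      + ε * ∑ j, Real.log (lamHat j / lamEps j) * (lamHat j - lamEps j) ≤
    (∫ p, ℓd p.2 (fcomb h lamHat p.1) * (fcomb h lamHat p.1 - fcomb h lamEps p.1) ∂P)
      - ∫ p, ℓd p.2 (fcomb h lamHat p.1) * (fcomb h lamHat p.1 - fcomb h lamEps p.1) ∂Pn := by
  obtain ⟨B2', hB2'⟩ := hloss.bdd2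
  obtain ⟨B1', hB1'⟩ := hloss.bddd0
  obtain ⟨B1, B2, hB1, hB2, hB1n, hB2n⟩ :
      ∃ B1 B2 : ℝ, (∀ y, |ℓd y 0| ≤ B1) ∧ (∀ y u, |ℓdd y u| ≤ B2) ∧ 0 ≤ B1 ∧ 0 ≤ B2 :=
    ⟨max B1' 0, max B2' 0, fun y => (hB1' y).trans (le_max_left _ _),
      fun y u => (hB2' y u).trans (le_max_left _ _), le_max_right _ _, le_max_right _ _⟩
  have mld := meas_ld hloss hmeas
  have mHat := fcomb_meas h hhm lamHat
  have mEps := fcomb_meas h hhm lamEps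
  have bHat : ∀ x, |fcomb h lamHat x| ≤ 1 := fun x => fcomb_bound hhb hHat x
  have bEps : ∀ x, |fcomb h lamEps x| ≤ 1 := fun x => fcomb_bound hhb hEps x
  have hldb : ∀ (y : T) (u : ℝ), |u| ≤ 1 → |ℓd y u| ≤ B1 + B2 := by
    intro y u hu
    have := ld_bound hloss hB1 hB2 y u
    nlinarith
  have hg1m : Measurable fun p : S × T =>
      ℓd p.2 (fcomb h lamHat p.1) * (fcomb h lamHat p.1 - fcomb h lamEps p.1) :=
    (mld.comp (measurable_snd.prodMk (mHat.comp measurable_fst))).mul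
      ((mHat.comp measurable_fst).sub (mEps.comp measurable_fst))
  have hg2m : Measurable fun p : S × T =>
      ℓd p.2 (fcomb h lamEps p.1) * (fcomb h lamHat p.1 - fcomb h lamEps p.1) :=
    (mld.comp (measurable_snd.prodMk (mEps.comp measurable_fst))).mul
      ((mHat.comp measurable_fst).sub (mEps.comp measurable_fst))
  have hg1b : ∀ p : S × T,
      |ℓd p.2 (fcomb h lamHat p.1) * (fcomb h lamHat p.1 - fcomb h lamEps p.1)|
        ≤ (B1 + B2) * 2 := by
    intro p
    rw [abs_mul]
    have h1 := hldb p.2 _ (bHat p.1)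
    have h2 : |fcomb h lamHat p.1 - fcomb h lamEps p.1| ≤ 2 :=
      (abs_sub _ _).trans (by linarith [bHat p.1, bEps p.1])
    exact mul_le_mul h1 h2 (abs_nonneg _) (le_trans (abs_nonneg _) h1)
  have hg2b : ∀ p : S × T,
      |ℓd p.2 (fcomb h lamEps p.1) * (fcomb h lamHat p.1 - fcomb h lamEps p.1)|
        ≤ (B1 + B2) * 2 := by
    intro p
    rw [abs_mul]
    have h1 := hldb p.2 _ (bEps p.1)
    have h2 : |fcomb h lamHat p.1 - fcomb h lamEps p.1| ≤ 2 :=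
      (abs_sub _ _).trans (by linarith [bHat p.1, bEps p.1])
    exact mul_le_mul h1 h2 (abs_nonneg _) (le_trans (abs_nonneg _) h1)
  have hg1P : Integrable (fun p : S × T =>
      ℓd p.2 (fcomb h lamHat p.1) * (fcomb h lamHat p.1 - fcomb h lamEps p.1)) P :=
    integrable_of_bound P hg1m hg1b
  have hg2P : Integrable (fun p : S × T =>
      ℓd p.2 (fcomb h lamEps p.1) * (fcomb h lamHat p.1 - fcomb h lamEps p.1)) P :=
    integrable_of_bound P hg2m hg2b
  -- split the left integral
  have hsplit : (∫ p, (ℓd p.2 (fcomb h lamHat p.1) - ℓd p.2 (fcomb h lamEps p.1))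
        * (fcomb h lamHat p.1 - fcomb h lamEps p.1) ∂P)
      = (∫ p, ℓd p.2 (fcomb h lamHat p.1) * (fcomb h lamHat p.1 - fcomb h lamEps p.1) ∂P)
        - ∫ p, ℓd p.2 (fcomb h lamEps p.1) * (fcomb h lamHat p.1 - fcomb h lamEps p.1) ∂P := by
    rw [← integral_sub hg1P hg2P]
    apply integral_congr_ae
    filter_upwards with p
    ring
  -- support conditions
  have hsupp1 : ε = 0 ∨ ∀ j, lamEps j = 0 → lamHat j = 0 := by
    rcases eq_or_lt_of_le hε with h0 | hpos
    · exact Or.inl h0.symm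
    · right
      intro j hj
      by_contra hne
      have hjpos : 0 < lamHat j := lt_of_le_of_ne (hHat.1 j) (Ne.symm hne)
      exact support_lemma hloss hmeas P h hhm hhb hpos lamEps lamHat hEps hHat hEpsMin j hj hjpos
  have hsupp2 : ε = 0 ∨ ∀ j, lamHat j = 0 → lamEps j = 0 := by
    rcases eq_or_lt_of_le hε with h0 | hpos
    · exact Or.inl h0.symm
    · right
      intro j hj
      by_contra hne
      have hjpos : 0 < lamEps j := lt_of_le_of_ne (hEps.1 j) (Ne.symm hne)
      exact support_lemma hloss hmeas Pn h hhm hhb hpos lamHat lamEps hHat hEps hHatMin j hj hjpos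
  have A1 := foc hloss hmeas P h hhm hhb ε lamEps lamHat hEps hHat hEpsMin hsupp1
  have A2 := foc hloss hmeas Pn h hhm hhb ε lamHat lamEps hHat hEps hHatMin hsupp2
  -- rewrite A2's integral
  have hneg : (∫ p, ℓd p.2 (fcomb h lamHat p.1)
        * (fcomb h lamEps p.1 - fcomb h lamHat p.1) ∂Pn)
      = -∫ p, ℓd p.2 (fcomb h lamHat p.1) * (fcomb h lamHat p.1 - fcomb h lamEps p.1) ∂Pn := by
    rw [← integral_neg]
    apply integral_congr_ae
    filter_upwards with p
    ring
  rw [hneg] at A2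
  -- entropy sum manipulations
  have hsum0 : ∑ j, (lamHat j - lamEps j) = 0 := by
    rw [Finset.sum_sub_distrib, hHat.2, hEps.2]
    ring
  have hA1sum : ∑ j, (Real.log (lamEps j) + 1) * (lamHat j - lamEps j)
      = ∑ j, Real.log (lamEps j) * (lamHat j - lamEps j) := by
    have : ∀ j : Fin N, (Real.log (lamEps j) + 1) * (lamHat j - lamEps j)
        = Real.log (lamEps j) * (lamHat j - lamEps j) + (lamHat j - lamEps j) := by
      intro j; ring
    rw [Finset.sum_congr rfl (fun j _ => this j), Finset.sum_add_distrib, hsum0, add_zero]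
  have hA2sum : ∑ j, (Real.log (lamHat j) + 1) * (lamEps j - lamHat j)
      = -∑ j, Real.log (lamHat j) * (lamHat j - lamEps j) := by
    have hterm : ∀ j : Fin N, (Real.log (lamHat j) + 1) * (lamEps j - lamHat j)
        = -(Real.log (lamHat j) * (lamHat j - lamEps j)) + -(lamHat j - lamEps j) :=
      fun j => by ring
    rw [Finset.sum_congr rfl (fun j _ => hterm j), Finset.sum_add_distrib,
      Finset.sum_neg_distrib, Finset.sum_neg_distrib, hsum0, neg_zero, add_zero]
  rw [hA1sum] at A1
  rw [hA2sum] at A2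
  -- K term
  have hK : ε * ∑ j, Real.log (lamHat j / lamEps j) * (lamHat j - lamEps j)
      = ε * ∑ j, (Real.log (lamHat j) * (lamHat j - lamEps j)
          - Real.log (lamEps j) * (lamHat j - lamEps j)) := by
    rcases eq_or_lt_of_le hε with h0 | hpos
    · rw [← h0, zero_mul, zero_mul]
    · congr 1
      apply Finset.sum_congr rfl
      intro j _
      rcases eq_or_lt_of_le (hEps.1 j) with he0 | hepos
      · have hh0 : lamHat j = 0 := (hsupp1.resolve_left (ne_of_gt hpos)) j he0.symm
        rw [← he0, hh0]
        simp
      · have hhne : lamHat j ≠ 0 := by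
          intro hc
          have := (hsupp2.resolve_left (ne_of_gt hpos)) j hc
          exact (ne_of_gt hepos) this
        rw [Real.log_div hhne (ne_of_gt hepos)]
        ring
  rw [hsplit, hK, Finset.sum_sub_distrib, mul_sub]
  linarith [A1, A2]

end EntropySparse
end

section
/- Since f_* minimizes the risk P(ℓ∘f) over all measurable functions, the function ℓ'∘f_* is orthogonal in L₂(P) to the linear span 𝓛 of the dictionary, i.e. P((ℓ'∘f_*)·h_j) = 0 for all j = 1,…,N. Moreover, for any function f̄ uniformly bounded by M with ℓ'∘f̄ ∈ 𝓛⊥ (in particular f̄ = f_*), the function g_ε := P_𝓛(ℓ'∘f_{λ^ε}) satisfies ‖g_ε‖_{L₂(P)} ≤ C·‖f_{λ^ε} − f̄‖_{L₂(Π)}, where C is the (uniform) Lipschitz constant of u ↦ ℓ'_u(y,u). -/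
open MeasureTheory Real Finset
open scoped BigOperators ENNReal

namespace EntropySparse

noncomputable def l2sq {S : Type*} [MeasurableSpace S] (μ : Measure S) (f : S → ℝ) : ℝ :=
  ∫ x, (f x) ^ 2 ∂μ

noncomputable def l2norm {S : Type*} [MeasurableSpace S] (μ : Measure S) (f : S → ℝ) : ℝ :=
  Real.sqrt (l2sq μ f)

noncomputable def projFin {E : Type*} [NormedAddCommGroup E] [InnerProductSpace ℝ E]
    (K : Submodule ℝ E) (hK : FiniteDimensional ℝ K) (g : E) : E :=
  haveI := hK
  (K.orthogonalProjectionOnto g : E)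

/-- Auxiliary: joint measurability of the derivative of a jointly measurable loss. -/
lemma aux_meas_ld {T : Type*} [MeasurableSpace T] (ℓ ℓd : T → ℝ → ℝ)
    (hd : ∀ y u, HasDerivAt (ℓ y) (ℓd y u) u)
    (hmeas : Measurable fun p : T × ℝ => ℓ p.1 p.2) :
    Measurable fun p : T × ℝ => ℓd p.1 p.2 := by
  have hFm : ∀ n : ℕ, Measurable (fun p : T × ℝ =>
      (ℓ p.1 (p.2 + 1 / (n + 1)) - ℓ p.1 p.2) * (n + 1)) := by
    intro n
    exact ((hmeas.comp (measurable_fst.prodMk (measurable_snd.add_const _))).sub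
      hmeas).mul_const _
  apply measurable_of_tendsto_metrizable hFm
  rw [tendsto_pi_nhds]
  intro p
  have hs : Filter.Tendsto (slope (ℓ p.1) p.2) (nhdsWithin p.2 {p.2}ᶜ) (nhds (ℓd p.1 p.2)) :=
    hasDerivAt_iff_tendsto_slope.mp (hd p.1 p.2)
  have hseq : Filter.Tendsto (fun n : ℕ => p.2 + 1 / (n + 1 : ℝ)) Filter.atTop
      (nhdsWithin p.2 {p.2}ᶜ) := by
    apply tendsto_nhdsWithin_of_tendsto_nhds_of_eventually_within
    · have : Filter.Tendsto (fun n : ℕ => 1 / (n + 1 : ℝ)) Filter.atTop (nhds 0) :=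
        tendsto_one_div_add_atTop_nhds_zero_nat
      simpa using this.const_add p.2
    · filter_upwards with n
      have : (0 : ℝ) < 1 / (n + 1 : ℝ) := by positivity
      simp only [Set.mem_compl_iff, Set.mem_singleton_iff]
      linarith
  have := hs.comp hseq
  apply this.congr
  intro n
  have hpos : (0 : ℝ) < 1 / (n + 1 : ℝ) := by positivity
  rw [Function.comp_apply, slope_def_field,
    show p.2 + 1 / (n + 1 : ℝ) - p.2 = 1 / (n + 1 : ℝ) by ring, one_div,
    div_eq_mul_inv, inv_inv]

/-- Auxiliary: first-order optimality condition for the risk minimizer. -/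
lemma aux_part1 {S T : Type*} [MeasurableSpace S] [MeasurableSpace T] (ℓ ℓd : T → ℝ → ℝ)
    (hnn : ∀ y u, 0 ≤ ℓ y u)
    (hder : ∀ y u, HasDerivAt (ℓ y) (ℓd y u) u)
    (hldm : Measurable fun p : T × ℝ => ℓd p.1 p.2)
    (hmeas : Measurable fun p : T × ℝ => ℓ p.1 p.2)
    (C : ℝ) (hC : 0 ≤ C) (hLip : ∀ y u v, |ℓd y u - ℓd y v| ≤ C * |u - v|)
    (Bd0 : ℝ) (hBd0 : ∀ y, |ℓd y 0| ≤ Bd0) (B0 : ℝ) (hB0 : ∀ y, ℓ y 0 ≤ B0)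
    (P : Measure (S × T)) [IsProbabilityMeasure P]
    (M : ℝ) (hM : 0 ≤ M) (fstar : S → ℝ) (hfm : Measurable fstar) (hfb : ∀ x, |fstar x| ≤ M)
    (hfmin : ∀ g : S → ℝ, Measurable g →
      (∫ p, ℓ p.2 (fstar p.1) ∂P) ≤ ∫ p, ℓ p.2 (g p.1) ∂P)
    (hj : S → ℝ) (hhm : Measurable hj) (hhb : ∀ x, |hj x| ≤ 1) :
    ∫ p, ℓd p.2 (fstar p.1) * hj p.1 ∂P = 0 := by
  set K' : ℝ := Bd0 + C * (M + 1) with hK'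
  have hldb : ∀ (y : T) (u : ℝ), |u| ≤ M + 1 → |ℓd y u| ≤ K' := by
    intro y u hu
    have h1 : |ℓd y u - ℓd y 0| ≤ C * |u - 0| := hLip y u 0
    have h2 : |ℓd y u| ≤ |ℓd y 0| + |ℓd y u - ℓd y 0| := by
      have := abs_sub_abs_le_abs_sub (ℓd y u) (ℓd y 0); linarith [abs_nonneg (ℓd y u - ℓd y 0)]
    have h3 : C * |u - 0| ≤ C * (M + 1) := by
      apply mul_le_mul_of_nonneg_left _ hC; simpa using hu
    have := hBd0 y; rw [hK']; linarith
  have hlb : ∀ (y : T) (u : ℝ), |u| ≤ M + 1 → |ℓ y u| ≤ B0 + K' * (M + 1) := by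
    intro y u hu
    have hIcc : u ∈ Set.Icc (-(M+1)) (M+1) := by
      constructor <;> [linarith [neg_abs_le u]; linarith [le_abs_self u]]
    have h0 : (0:ℝ) ∈ Set.Icc (-(M+1)) (M+1) := by constructor <;> linarith
    have key : ‖ℓ y u - ℓ y 0‖ ≤ K' * ‖u - 0‖ := by
      apply (convex_Icc (-(M+1)) (M+1)).norm_image_sub_le_of_norm_hasDerivWithin_le
        (f' := ℓd y) (fun v hv => (hder y v).hasDerivWithinAt)
        (fun v hv => hldb y v (abs_le.mpr ⟨hv.1, hv.2⟩)) h0 hIcc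
    have hK'nn : 0 ≤ K' := le_trans (abs_nonneg _) (hldb y 0 (by simp; linarith))
    rw [abs_of_nonneg (hnn y u)]
    have : ℓ y u - ℓ y 0 ≤ |ℓ y u - ℓ y 0| := le_abs_self _
    have hn : ‖u - 0‖ ≤ M + 1 := by simpa using hu
    have := hB0 y
    have hh : ‖ℓ y u - ℓ y 0‖ ≤ K' * (M + 1) := key.trans (by
      exact mul_le_mul_of_nonneg_left hn hK'nn)
    rw [Real.norm_eq_abs] at hh
    linarith [le_abs_self (ℓ y u - ℓ y 0)]
  set F : ℝ → S × T → ℝ := fun t p => ℓ p.2 (fstar p.1 + t * hj p.1) with hF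
  set F' : ℝ → S × T → ℝ := fun t p => ℓd p.2 (fstar p.1 + t * hj p.1) * hj p.1 with hF'
  have hargb : ∀ (t : ℝ), |t| ≤ 1 → ∀ p : S × T, |fstar p.1 + t * hj p.1| ≤ M + 1 := by
    intro t ht p
    calc |fstar p.1 + t * hj p.1| ≤ |fstar p.1| + |t * hj p.1| := abs_add_le _ _
    _ ≤ M + 1 := by
        rw [abs_mul]
        have := hfb p.1; have := hhb p.1; have := abs_nonneg t
        nlinarith [abs_nonneg (hj p.1)]
  have hFmeas : ∀ t : ℝ, Measurable (F t) := by
    intro t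
    exact hmeas.comp (measurable_snd.prodMk
      ((hfm.comp measurable_fst).add ((hhm.comp measurable_fst).const_mul t)))
  have hD := hasDerivAt_integral_of_dominated_loc_of_deriv_le (μ := P) (x₀ := (0:ℝ))
    (bound := fun _ => K') (Metric.ball_mem_nhds (0:ℝ) one_pos)
    (Filter.Eventually.of_forall fun t => (hFmeas t).aestronglyMeasurable)
    (by
      refine ⟨(hFmeas 0).aestronglyMeasurable, HasFiniteIntegral.of_bounded
        (C := B0 + K' * (M + 1)) (Filter.Eventually.of_forall fun p => ?_)⟩
      exact hlb p.2 _ (hargb 0 (by norm_num) p))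
    ((hldm.comp (measurable_snd.prodMk
      ((hfm.comp measurable_fst).add ((hhm.comp measurable_fst).const_mul 0)))).mul
      (hhm.comp measurable_fst)).aestronglyMeasurable
    (Filter.Eventually.of_forall fun p => by
      intro t ht
      rw [Metric.mem_ball, dist_zero_right, Real.norm_eq_abs] at ht
      have h1 : |ℓd p.2 (fstar p.1 + t * hj p.1)| ≤ K' := hldb _ _ (hargb t ht.le p)
      have hK'nn : 0 ≤ K' := le_trans (abs_nonneg _) h1
      calc ‖F' t p‖ = |ℓd p.2 (fstar p.1 + t * hj p.1)| * |hj p.1| := by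
            rw [hF', Real.norm_eq_abs, abs_mul]
      _ ≤ K' * 1 := mul_le_mul h1 (hhb p.1) (abs_nonneg _) hK'nn
      _ = K' := mul_one _)
    (integrable_const _)
    (Filter.Eventually.of_forall fun p => by
      intro t ht
      have hinner : HasDerivAt (fun s => fstar p.1 + s * hj p.1) (hj p.1) t := by
        simpa using ((hasDerivAt_id t).mul_const (hj p.1)).const_add (fstar p.1)
      exact (hder p.2 (fstar p.1 + t * hj p.1)).comp t hinner)
  obtain ⟨-, hD⟩ := hD
  have hmin : IsLocalMin (fun t => ∫ p, F t p ∂P) 0 := by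
    apply Filter.Eventually.of_forall
    intro t
    have h1 : (∫ p, ℓ p.2 (fstar p.1) ∂P) ≤ ∫ p, F t p ∂P :=
      hfmin (fun x => fstar x + t * hj x) (hfm.add (hhm.const_mul t))
    have h2 : (∫ p, F 0 p ∂P) = ∫ p, ℓ p.2 (fstar p.1) ∂P := by
      apply integral_congr_ae; filter_upwards with p; simp [hF]
    simpa [h2] using h1
  have hzero := hmin.hasDerivAt_eq_zero hD
  rw [← hzero]
  apply integral_congr_ae; filter_upwards with p; simp [hF']

/-- Auxiliary: the projection bound. -/
lemma aux_part2 {S T : Type*} [MeasurableSpace S] [MeasurableSpace T] (ℓd : T → ℝ → ℝ)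
    (C : ℝ) (hC : 0 ≤ C) (hLip : ∀ y u v, |ℓd y u - ℓd y v| ≤ C * |u - v|)
    (P : Measure (S × T)) [IsProbabilityMeasure P]
    {N : ℕ} (h : Fin N → S → ℝ)
    (hmemh : ∀ j, MemLp (fun p : S × T => h j p.1) 2 P)
    (M : ℝ)
    (feps : S → ℝ) (hfem : Measurable feps) (hfeb : ∀ x, |feps x| ≤ 1)
    (hmemEps : MemLp (fun p : S × T => ℓd p.2 (feps p.1)) 2 P)
    (fbar : S → ℝ) (hfbm : Measurable fbar) (hfbb : ∀ x, |fbar x| ≤ M)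
    (hmembar : MemLp (fun p : S × T => ℓd p.2 (fbar p.1)) 2 P)
    (horth : hmembar.toLp (fun p : S × T => ℓd p.2 (fbar p.1)) ∈
          (Submodule.span ℝ
            (Set.range fun j => (hmemh j).toLp (fun p : S × T => h j p.1)))ᗮ) :
    ‖projFin
        (Submodule.span ℝ
          (Set.range fun j => (hmemh j).toLp (fun p : S × T => h j p.1)))
        (FiniteDimensional.span_of_finite ℝ (Set.finite_range _))
        (hmemEps.toLp (fun p : S × T => ℓd p.2 (feps p.1)))‖ ≤
      C * Real.sqrt (∫ x, (feps x - fbar x) ^ 2 ∂(P.map Prod.fst)) := by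
  set K := Submodule.span ℝ
    (Set.range fun j => (hmemh j).toLp (fun p : S × T => h j p.1)) with hKdef
  haveI hFD : FiniteDimensional ℝ K := FiniteDimensional.span_of_finite ℝ (Set.finite_range _)
  set G := hmemEps.toLp (fun p : S × T => ℓd p.2 (feps p.1)) with hG
  set Hb := hmembar.toLp (fun p : S × T => ℓd p.2 (fbar p.1)) with hHb
  have hproj : projFin K hFD G = ↑(K.orthogonalProjectionOnto (G - Hb)) := by
    rw [projFin, map_sub, Submodule.orthogonalProjectionOnto_apply_of_mem_orthogonal horth,
      sub_zero]
  have hcontr : ‖(K.orthogonalProjectionOnto (G - Hb) : Lp ℝ 2 P)‖ ≤ ‖G - Hb‖ := by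
    have h1 : ‖K.orthogonalProjectionOnto (G - Hb)‖ ≤ ‖K.orthogonalProjectionOnto‖ * ‖G - Hb‖ :=
      (K.orthogonalProjectionOnto).le_opNorm _
    have h2 : ‖K.orthogonalProjectionOnto‖ * ‖G - Hb‖ ≤ 1 * ‖G - Hb‖ :=
      mul_le_mul_of_nonneg_right (K.orthogonalProjectionOnto_norm_le) (norm_nonneg _)
    calc ‖(K.orthogonalProjectionOnto (G - Hb) : Lp ℝ 2 P)‖
        = ‖K.orthogonalProjectionOnto (G - Hb)‖ := rfl
    _ ≤ 1 * ‖G - Hb‖ := h1.trans h2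
    _ = ‖G - Hb‖ := one_mul _
  set d : S × T → ℝ := fun p => ℓd p.2 (feps p.1) - ℓd p.2 (fbar p.1) with hd
  have hd2 : MemLp d 2 P := hmemEps.sub hmembar
  have hGHb : G - Hb = hd2.toLp d := by
    rw [hG, hHb, ← MemLp.toLp_sub]
    exact MemLp.toLp_congr _ _ (Filter.Eventually.of_forall fun p => rfl)
  have hsq : ‖G - Hb‖ ^ 2 = ∫ p, d p ^ 2 ∂P := by
    rw [hGHb, ← real_inner_self_eq_norm_sq, L2.inner_def]
    apply integral_congr_ae
    filter_upwards [hd2.coeFn_toLp] with p hp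
    simp [hp, RCLike.inner_apply, sq]
  have hdiffb : ∀ x, |feps x - fbar x| ≤ 1 + M := by
    intro x
    calc |feps x - fbar x| ≤ |feps x| + |fbar x| := abs_sub _ _
    _ ≤ 1 + M := add_le_add (hfeb x) (hfbb x)
  have hintR : Integrable (fun p : S × T => C ^ 2 * (feps p.1 - fbar p.1) ^ 2) P := by
    refine ⟨((((hfem.comp measurable_fst).sub (hfbm.comp measurable_fst)).pow_const 2).const_mul
      _).aestronglyMeasurable, HasFiniteIntegral.of_bounded (C := C ^ 2 * (1 + M) ^ 2)
      (Filter.Eventually.of_forall fun p => ?_)⟩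
    rw [Real.norm_eq_abs, abs_mul, abs_pow, abs_pow, sq_abs, sq_abs]
    have h1 := hdiffb p.1
    have h2 : (feps p.1 - fbar p.1) ^ 2 ≤ (1 + M) ^ 2 := by
      nlinarith [abs_nonneg (feps p.1 - fbar p.1), neg_abs_le (feps p.1 - fbar p.1),
        le_abs_self (feps p.1 - fbar p.1)]
    exact mul_le_mul_of_nonneg_left h2 (sq_nonneg C)
  have hmono : (∫ p, d p ^ 2 ∂P) ≤ ∫ p, C ^ 2 * (feps p.1 - fbar p.1) ^ 2 ∂P := by
    apply integral_mono hd2.integrable_sq hintR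
    intro p
    have h1 := hLip p.2 (feps p.1) (fbar p.1)
    have h2 : |d p| ^ 2 ≤ (C * |feps p.1 - fbar p.1|) ^ 2 := by
      apply pow_le_pow_left₀ (abs_nonneg _) h1
    calc d p ^ 2 = |d p| ^ 2 := (sq_abs _).symm
    _ ≤ (C * |feps p.1 - fbar p.1|) ^ 2 := h2
    _ = C ^ 2 * (feps p.1 - fbar p.1) ^ 2 := by rw [mul_pow, sq_abs]
  have hmap : (∫ x, (feps x - fbar x) ^ 2 ∂(P.map Prod.fst))
      = ∫ p, (feps p.1 - fbar p.1) ^ 2 ∂P := by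
    exact integral_map measurable_fst.aemeasurable
      ((hfem.sub hfbm).pow_const 2).aestronglyMeasurable
  have hfinal : ‖G - Hb‖ ≤ C * Real.sqrt (∫ x, (feps x - fbar x) ^ 2 ∂(P.map Prod.fst)) := by
    have h1 : ‖G - Hb‖ = Real.sqrt (∫ p, d p ^ 2 ∂P) := by
      rw [← hsq, Real.sqrt_sq (norm_nonneg _)]
    rw [h1, hmap]
    have h2 : (∫ p, d p ^ 2 ∂P) ≤ C ^ 2 * ∫ p, (feps p.1 - fbar p.1) ^ 2 ∂P := by
      rw [← MeasureTheory.integral_const_mul]; exact hmono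
    calc Real.sqrt (∫ p, d p ^ 2 ∂P)
        ≤ Real.sqrt (C ^ 2 * ∫ p, (feps p.1 - fbar p.1) ^ 2 ∂P) := Real.sqrt_le_sqrt h2
    _ = C * Real.sqrt (∫ p, (feps p.1 - fbar p.1) ^ 2 ∂P) := by
        rw [Real.sqrt_mul (sq_nonneg C), Real.sqrt_sq hC]
  rw [hproj]
  exact hcontr.trans hfinal

/-- `ℓ' ∙ f_*` is orthogonal in `L₂(P)` to the linear span `𝓛` of the dictionary, and for
any `f̄` bounded by `M` with `ℓ' ∙ f̄ ∈ 𝓛⊥`, the projection `g_ε = P_𝓛(ℓ' ∙ f_{λ^ε})`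
satisfies `‖g_ε‖_{L₂(P)} ≤ C ‖f_{λ^ε} − f̄‖_{L₂(Π)}` with `C` the Lipschitz constant of `ℓ'`. -/
theorem statement15 {S T : Type*} [MeasurableSpace S] [MeasurableSpace T]
    (ℓ ℓd ℓdd : T → ℝ → ℝ) (hloss : NiceLoss ℓ ℓd ℓdd)
    (hmeas : Measurable fun p : T × ℝ => ℓ p.1 p.2)
    (C : ℝ) (hLip : ∀ y u v, |ℓd y u - ℓd y v| ≤ C * |u - v|)
    (P : Measure (S × T)) [IsProbabilityMeasure P]
    {N : ℕ} (h : Fin N → S → ℝ) (hhm : ∀ j, Measurable (h j)) (hhb : ∀ j x, |h j x| ≤ 1)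
    (hmemh : ∀ j, MemLp (fun p : S × T => h j p.1) 2 P)
    (M : ℝ) (fstar : S → ℝ) (hfm : Measurable fstar) (hfb : ∀ x, |fstar x| ≤ M)
    (hfmin : ∀ g : S → ℝ, Measurable g → risk P ℓ fstar ≤ risk P ℓ g)
    (ε : ℝ) (hε : 0 ≤ ε)
    (lamEps : Fin N → ℝ) (hEps : lamEps ∈ simplex N)
    (hEpsMin : IsMinOn
      (fun l : Fin N → ℝ => risk P ℓ (fcomb h l) + ε * ∑ j, l j * Real.log (l j))
      (simplex N) lamEps)
    (hmemEps : MemLp (fun p : S × T => ℓd p.2 (fcomb h lamEps p.1)) 2 P) :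
    (∀ j, ∫ p, ℓd p.2 (fstar p.1) * h j p.1 ∂P = 0) ∧
    (∀ fbar : S → ℝ, Measurable fbar → (∀ x, |fbar x| ≤ M) →
      ∀ hmembar : MemLp (fun p : S × T => ℓd p.2 (fbar p.1)) 2 P,
        hmembar.toLp (fun p : S × T => ℓd p.2 (fbar p.1)) ∈
          (Submodule.span ℝ
            (Set.range fun j => (hmemh j).toLp (fun p : S × T => h j p.1)))ᗮ →
        ‖projFin
            (Submodule.span ℝ
              (Set.range fun j => (hmemh j).toLp (fun p : S × T => h j p.1)))
            (FiniteDimensional.span_of_finite ℝ (Set.finite_range _))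
            (hmemEps.toLp (fun p : S × T => ℓd p.2 (fcomb h lamEps p.1)))‖ ≤
          C * l2norm (P.map Prod.fst) (fun x => fcomb h lamEps x - fbar x)) := by
  -- basic facts
  have hne : Nonempty (S × T) := by
    by_contra hn
    rw [not_nonempty_iff] at hn
    have h1 : P Set.univ = 1 := measure_univ
    rw [Set.univ_eq_empty_iff.mpr hn] at h1
    simp at h1
  obtain ⟨p0⟩ := hne
  have hC : 0 ≤ C := by
    have := hLip p0.2 0 1
    simp only [zero_sub, abs_neg, abs_one, mul_one] at this
    linarith [abs_nonneg (ℓd p0.2 0 - ℓd p0.2 1)]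
  have hM : 0 ≤ M := le_trans (abs_nonneg _) (hfb p0.1)
  have hldm : Measurable fun p : T × ℝ => ℓd p.1 p.2 :=
    aux_meas_ld ℓ ℓd hloss.hderiv hmeas
  obtain ⟨Bd0, hBd0⟩ := hloss.bddd0
  obtain ⟨B0, hB0⟩ := hloss.bdd0
  constructor
  · intro j
    exact aux_part1 ℓ ℓd hloss.nonneg hloss.hderiv hldm hmeas C hC hLip Bd0 hBd0 B0 hB0 P
      M hM fstar hfm hfb (fun g hg => hfmin g hg) (h j) (hhm j) (hhb j)
  · intro fbar hfbm hfbb hmembar horth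
    have hfem : Measurable (fcomb h lamEps) := by
      unfold fcomb
      exact Finset.measurable_sum _ (fun j _ => (hhm j).const_mul _)
    have hfeb : ∀ x, |fcomb h lamEps x| ≤ 1 := by
      intro x
      calc |fcomb h lamEps x| ≤ ∑ j, |lamEps j * h j x| := Finset.abs_sum_le_sum_abs _ _
      _ ≤ ∑ j, lamEps j := by
          apply Finset.sum_le_sum
          intro j _
          rw [abs_mul, abs_of_nonneg (hEps.1 j)]
          have := hhb j x
          nlinarith [hEps.1 j, abs_nonneg (h j x)]
      _ = 1 := hEps.2
    have := aux_part2 ℓd C hC hLip P h hmemh M (fcomb h lamEps) hfem hfeb hmemEps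
      fbar hfbm hfbb hmembar horth
    simpa [l2norm, l2sq] using this

end EntropySparse
end

section
/- For any vector w ∈ ℝ^N and any λ ∈ Λ, the alignment coefficient satisfies a_H(Λ,λ,w) ≤ ‖w‖_H := sup{⟨w,u⟩_{ℓ₂} : u ∈ ℝ^N, ‖H^{1/2}u‖_{ℓ₂} = 1}, and if H is nonsingular then ‖w‖_H = ‖H^{−1/2}w‖_{ℓ₂}. Moreover, if J := supp(w), then ‖w‖_H ≤ ‖w‖_{ℓ₂}/√(κ(J)·(1 − ρ²(J))) ≤ ‖w‖_{ℓ∞}·√(d(J))/√(κ(J)·(1 − ρ²(J))), where d(J) := card(J), κ(J) is the minimal eigenvalue of the Gram submatrix H_J := (⟨h_i,h_j⟩_{L₂(Π)})_{i,j∈J}, and ρ(J) := sup{⟨f₁,f₂⟩_{L₂(Π)}/(‖f₁‖_{L₂(Π)}·‖f₂‖_{L₂(Π)}) : f₁ ∈ L_J, f₂ ∈ L_{J^c}} with L_J the linear span of {h_j : j ∈ J} (assume κ(J) > 0 and ρ(J) < 1). -/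
open MeasureTheory Real Finset
open scoped BigOperators
open Matrix

namespace EntropySparse

def tangentCone {N : ℕ} (lam : Fin N → ℝ) : Set (Fin N → ℝ) :=
  {v | ∃ t : ℝ, 0 < t ∧ lam + t • v ∈ simplex N}

noncomputable def alignCoef {S : Type*} [MeasurableSpace S] (μ : Measure S) {N : ℕ}
    (h : Fin N → S → ℝ) (lam w : Fin N → ℝ) : ℝ :=
  sSup {r | ∃ u ∈ tangentCone lam, l2norm μ (fcomb h u) = 1 ∧ r = ∑ j, w j * u j}

/-- The positive semidefinite square root of a positive semidefinite matrix, as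
`Matrix.PosSemidef.sqrt` was defined in the older Mathlib. -/
noncomputable def posSemidefSqrt {n : Type*} [Fintype n] [DecidableEq n]
    {A : Matrix n n ℝ} (hA : A.PosSemidef) : Matrix n n ℝ :=
  (hA.1.eigenvectorUnitary : Matrix n n ℝ) *
    Matrix.diagonal ((RCLike.ofReal : ℝ → ℝ) ∘ (√·) ∘ hA.1.eigenvalues) *
    (star hA.1.eigenvectorUnitary : Matrix n n ℝ)

lemma posSemidefSqrt_mul_self {n : Type*} [Fintype n] [DecidableEq n]
    {A : Matrix n n ℝ} (hA : A.PosSemidef) : posSemidefSqrt hA * posSemidefSqrt hA = A := by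
  have hspec := hA.1.spectral_theorem
  rw [Unitary.conjStarAlgAut_apply] at hspec
  have hUU : (star hA.1.eigenvectorUnitary : Matrix n n ℝ) * (hA.1.eigenvectorUnitary : Matrix n n ℝ) = 1 :=
    Unitary.coe_star_mul_self _
  have hDD : Matrix.diagonal ((RCLike.ofReal : ℝ → ℝ) ∘ (√·) ∘ hA.1.eigenvalues) *
      Matrix.diagonal ((RCLike.ofReal : ℝ → ℝ) ∘ (√·) ∘ hA.1.eigenvalues)
      = Matrix.diagonal ((RCLike.ofReal : ℝ → ℝ) ∘ hA.1.eigenvalues) := by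
    rw [Matrix.diagonal_mul_diagonal]
    congr 1
    funext i
    simp [Real.mul_self_sqrt (hA.eigenvalues_nonneg i)]
  unfold posSemidefSqrt
  conv_rhs => rw [hspec]
  calc _ = (hA.1.eigenvectorUnitary : Matrix n n ℝ) *
        Matrix.diagonal ((RCLike.ofReal : ℝ → ℝ) ∘ (√·) ∘ hA.1.eigenvalues) *
        ((star hA.1.eigenvectorUnitary : Matrix n n ℝ) * (hA.1.eigenvectorUnitary : Matrix n n ℝ)) *
        Matrix.diagonal ((RCLike.ofReal : ℝ → ℝ) ∘ (√·) ∘ hA.1.eigenvalues) *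
        (star hA.1.eigenvectorUnitary : Matrix n n ℝ) := by simp only [Matrix.mul_assoc]
    _ = _ := by rw [hUU, Matrix.mul_one, Matrix.mul_assoc _ (Matrix.diagonal _) (Matrix.diagonal _), hDD]

lemma posSemidefSqrt_transpose {n : Type*} [Fintype n] [DecidableEq n]
    {A : Matrix n n ℝ} (hA : A.PosSemidef) : (posSemidefSqrt hA)ᵀ = posSemidefSqrt hA := by
  rw [← Matrix.conjTranspose_eq_transpose_of_trivial]
  unfold posSemidefSqrt
  simp [Matrix.conjTranspose_mul, Matrix.mul_assoc, Matrix.star_eq_conjTranspose,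
    Matrix.conjTranspose_eq_transpose_of_trivial]

/-- Upper bounds for the alignment coefficient in terms of the Gram matrix `H` of the
dictionary: `a_H(Λ,λ,w) ≤ ‖w‖_H`, `‖w‖_H = ‖H^{−1/2}w‖_{ℓ₂}` when `H` is nonsingular,
and `‖w‖_H ≤ ‖w‖_{ℓ₂}/√(κ(J)(1−ρ²(J))) ≤ ‖w‖_{ℓ∞}√(d(J))/√(κ(J)(1−ρ²(J)))` for
`J = supp(w)`. -/
theorem statement16 {S : Type*} [MeasurableSpace S] (Pim : Measure S) [IsProbabilityMeasure Pim]
    {N : ℕ} (h : Fin N → S → ℝ) (hhm : ∀ j, Measurable (h j)) (hhb : ∀ j x, |h j x| ≤ 1)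
    (H : Matrix (Fin N) (Fin N) ℝ)
    (hHdef : H = Matrix.of fun i j => ∫ x, h i x * h j x ∂Pim)
    (hH : H.PosSemidef)
    (w lam : Fin N → ℝ) (hlam : lam ∈ simplex N)
    (J : Finset (Fin N)) (hJ : ∀ j, w j ≠ 0 ↔ j ∈ J)
    (wH κ ρ : ℝ)
    (hwH : wH = sSup {r | ∃ u : Fin N → ℝ, l2norm Pim (fcomb h u) = 1 ∧ r = ∑ j, w j * u j})
    (hκ : κ = sInf (Set.range
      ((hH.1.submatrix (fun x : {x // x ∈ J} => (x : Fin N))).eigenvalues)))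
    (hρ : ρ = sSup {r | ∃ u v : Fin N → ℝ,
        (∀ j, j ∉ J → u j = 0) ∧ (∀ j, j ∈ J → v j = 0) ∧
        r = (∫ x, fcomb h u x * fcomb h v x ∂Pim)
          / (l2norm Pim (fcomb h u) * l2norm Pim (fcomb h v))})
    (hκpos : 0 < κ) (hρlt : ρ < 1) :
    alignCoef Pim h lam w ≤ wH ∧
    (IsUnit H.det →
      wH = Real.sqrt (∑ j, ((((posSemidefSqrt hH)⁻¹).mulVec w) j) ^ 2)) ∧
    wH ≤ Real.sqrt (∑ j, (w j) ^ 2) / Real.sqrt (κ * (1 - ρ ^ 2)) ∧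
    Real.sqrt (∑ j, (w j) ^ 2) / Real.sqrt (κ * (1 - ρ ^ 2)) ≤
      (sSup (Set.range fun j => |w j|)) * Real.sqrt (J.card : ℝ)
        / Real.sqrt (κ * (1 - ρ ^ 2)) := by
  classical
  -- ## Basic integrability and the quadratic form identity
  have hint : ∀ i j : Fin N, Integrable (fun x => h i x * h j x) Pim := by
    intro i j
    refine Integrable.mono' (integrable_const 1) ((hhm i).mul (hhm j)).aestronglyMeasurable
      (ae_of_all _ fun x => ?_)
    rw [Real.norm_eq_abs, abs_mul]
    calc |h i x| * |h j x| ≤ 1 * 1 :=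
          mul_le_mul (hhb i x) (hhb j x) (abs_nonneg _) zero_le_one
      _ = 1 := one_mul 1
  have hbil : ∀ u v : Fin N → ℝ,
      ∫ x, fcomb h u x * fcomb h v x ∂Pim = u ⬝ᵥ H *ᵥ v := by
    intro u v
    have hpt : ∀ x, fcomb h u x * fcomb h v x
        = ∑ i, ∑ j, (u i * v j) * (h i x * h j x) := by
      intro x
      rw [fcomb, fcomb, Finset.sum_mul_sum]
      exact Finset.sum_congr rfl fun i _ => Finset.sum_congr rfl fun j _ => by ring
    calc ∫ x, fcomb h u x * fcomb h v x ∂Pim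
        = ∫ x, ∑ i, ∑ j, (u i * v j) * (h i x * h j x) ∂Pim := by simp_rw [hpt]
      _ = ∑ i, ∫ x, ∑ j, (u i * v j) * (h i x * h j x) ∂Pim :=
          integral_finset_sum _ fun i _ =>
            integrable_finset_sum _ fun j _ => ((hint i j).const_mul _)
      _ = ∑ i, ∑ j, ∫ x, (u i * v j) * (h i x * h j x) ∂Pim :=
          Finset.sum_congr rfl fun i _ =>
            integral_finset_sum _ fun j _ => ((hint i j).const_mul _)
      _ = ∑ i, ∑ j, (u i * v j) * H i j := by
          refine Finset.sum_congr rfl fun i _ => Finset.sum_congr rfl fun j _ => ?_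
          rw [integral_const_mul, hHdef]; rfl
      _ = u ⬝ᵥ H *ᵥ v := by
          simp only [dotProduct, Matrix.mulVec, Finset.mul_sum]
          exact Finset.sum_congr rfl fun i _ => Finset.sum_congr rfl fun j _ => by ring
  have hl2 : ∀ u : Fin N → ℝ, l2sq Pim (fcomb h u) = u ⬝ᵥ H *ᵥ u := by
    intro u
    rw [l2sq, ← hbil u u]
    simp_rw [pow_two]
  have hQnn : ∀ u : Fin N → ℝ, 0 ≤ u ⬝ᵥ H *ᵥ u := fun u => by simpa using hH.dotProduct_mulVec_nonneg u
  have hnorm : ∀ u : Fin N → ℝ, l2norm Pim (fcomb h u) = Real.sqrt (u ⬝ᵥ H *ᵥ u) := by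
    intro u; rw [l2norm, hl2]
  -- ## Square root of `H`
  have hsymR : (posSemidefSqrt hH)ᵀ = (posSemidefSqrt hH) := by
    exact posSemidefSqrt_transpose hH
  have hRdot : ∀ u v : Fin N → ℝ, u ⬝ᵥ H *ᵥ v = ((posSemidefSqrt hH) *ᵥ u) ⬝ᵥ ((posSemidefSqrt hH) *ᵥ v) := by
    intro u v
    calc u ⬝ᵥ H *ᵥ v = u ⬝ᵥ ((posSemidefSqrt hH) * (posSemidefSqrt hH)) *ᵥ v := by rw [posSemidefSqrt_mul_self hH]
      _ = (u ᵥ* (posSemidefSqrt hH)) ⬝ᵥ ((posSemidefSqrt hH) *ᵥ v) := by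
          rw [← Matrix.mulVec_mulVec, Matrix.dotProduct_mulVec]
      _ = ((posSemidefSqrt hH) *ᵥ u) ⬝ᵥ ((posSemidefSqrt hH) *ᵥ v) := by rw [← Matrix.mulVec_transpose, hsymR]
  have hsym : ∀ u v : Fin N → ℝ, u ⬝ᵥ H *ᵥ v = v ⬝ᵥ H *ᵥ u := by
    intro u v; rw [hRdot, hRdot, dotProduct_comm]
  have hsq : ∀ z : Fin N → ℝ, z ⬝ᵥ z = ∑ i, z i ^ 2 := by
    intro z; simp [dotProduct, pow_two]
  have hCS : ∀ u v : Fin N → ℝ, (u ⬝ᵥ H *ᵥ v) ^ 2 ≤ (u ⬝ᵥ H *ᵥ u) * (v ⬝ᵥ H *ᵥ v) := by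
    intro u v
    rw [hRdot u v, hRdot u u, hRdot v v, hsq, hsq]
    exact Finset.sum_mul_sq_le_sq_mul_sq univ _ _
  -- ## Facts about `ρ`
  have hρ_ub : ∀ r ∈ {r | ∃ u v : Fin N → ℝ,
      (∀ j, j ∉ J → u j = 0) ∧ (∀ j, j ∈ J → v j = 0) ∧
      r = (∫ x, fcomb h u x * fcomb h v x ∂Pim)
        / (l2norm Pim (fcomb h u) * l2norm Pim (fcomb h v))}, r ≤ 1 := by
    rintro r ⟨u, v, -, -, rfl⟩
    rw [hbil, hnorm, hnorm]
    set d := Real.sqrt (u ⬝ᵥ H *ᵥ u) * Real.sqrt (v ⬝ᵥ H *ᵥ v) with hd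
    have hd0 : 0 ≤ d := mul_nonneg (Real.sqrt_nonneg _) (Real.sqrt_nonneg _)
    have hdd : d ^ 2 = (u ⬝ᵥ H *ᵥ u) * (v ⬝ᵥ H *ᵥ v) := by
      rw [hd, mul_pow, Real.sq_sqrt (hQnn u), Real.sq_sqrt (hQnn v)]
    rcases eq_or_lt_of_le hd0 with hd0' | hd0'
    · rw [← hd0', div_zero]; exact zero_le_one
    · rw [div_le_one hd0']
      have h1 : (u ⬝ᵥ H *ᵥ v) ^ 2 ≤ d ^ 2 := by rw [hdd]; exact hCS u v
      nlinarith
  have hρ_bdd : BddAbove {r | ∃ u v : Fin N → ℝ,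
      (∀ j, j ∉ J → u j = 0) ∧ (∀ j, j ∈ J → v j = 0) ∧
      r = (∫ x, fcomb h u x * fcomb h v x ∂Pim)
        / (l2norm Pim (fcomb h u) * l2norm Pim (fcomb h v))} := ⟨1, hρ_ub⟩
  have hρ0 : 0 ≤ ρ := by
    rw [hρ]
    refine le_csSup hρ_bdd ⟨0, 0, fun j _ => rfl, fun j _ => rfl, ?_⟩
    have : ∀ x : S, fcomb h (0 : Fin N → ℝ) x = 0 := by intro x; simp [fcomb]
    simp [this]
  have hρsq : ρ ^ 2 < 1 := by nlinarith
  have hCq : (0:ℝ) < κ * (1 - ρ ^ 2) := mul_pos hκpos (by linarith)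
  -- cross term lower bound
  have hcross : ∀ u v : Fin N → ℝ, (∀ j, j ∉ J → u j = 0) → (∀ j, j ∈ J → v j = 0) →
      -(u ⬝ᵥ H *ᵥ v) ≤ ρ * (Real.sqrt (u ⬝ᵥ H *ᵥ u) * Real.sqrt (v ⬝ᵥ H *ᵥ v)) := by
    intro u v hu hv
    set d := Real.sqrt (u ⬝ᵥ H *ᵥ u) * Real.sqrt (v ⬝ᵥ H *ᵥ v) with hd
    have hd0 : 0 ≤ d := mul_nonneg (Real.sqrt_nonneg _) (Real.sqrt_nonneg _)
    have hdd : d ^ 2 = (u ⬝ᵥ H *ᵥ u) * (v ⬝ᵥ H *ᵥ v) := by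
      rw [hd, mul_pow, Real.sq_sqrt (hQnn u), Real.sq_sqrt (hQnn v)]
    rcases eq_or_lt_of_le hd0 with hd0' | hd0'
    · have h1 : (u ⬝ᵥ H *ᵥ v) ^ 2 ≤ d ^ 2 := by rw [hdd]; exact hCS u v
      have h2 : u ⬝ᵥ H *ᵥ v = 0 := by nlinarith
      rw [h2, ← hd0']; simp
    · have hmem : (-(u ⬝ᵥ H *ᵥ v)) / d ∈ {r | ∃ u v : Fin N → ℝ,
          (∀ j, j ∉ J → u j = 0) ∧ (∀ j, j ∈ J → v j = 0) ∧
          r = (∫ x, fcomb h u x * fcomb h v x ∂Pim)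
            / (l2norm Pim (fcomb h u) * l2norm Pim (fcomb h v))} := by
        refine ⟨-u, v, fun j hj => by simp [hu j hj], hv, ?_⟩
        rw [hbil, hnorm, hnorm]
        have e1 : (-u) ⬝ᵥ H *ᵥ v = -(u ⬝ᵥ H *ᵥ v) := by rw [neg_dotProduct]
        have e2 : (-u) ⬝ᵥ H *ᵥ (-u) = u ⬝ᵥ H *ᵥ u := by
          rw [neg_dotProduct, Matrix.mulVec_neg, dotProduct_neg, neg_neg]
        rw [e1, e2, hd]
      have := le_csSup hρ_bdd hmem
      rw [← hρ] at this
      calc -(u ⬝ᵥ H *ᵥ v) = (-(u ⬝ᵥ H *ᵥ v)) / d * d := by field_simp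
        _ ≤ ρ * d := mul_le_mul_of_nonneg_right this hd0
  -- ## eigenvalue bound on `J`
  have heig : ∀ u : Fin N → ℝ, (∀ j, j ∉ J → u j = 0) →
      κ * (∑ j, u j ^ 2) ≤ u ⬝ᵥ H *ᵥ u := by
    intro u hu
    set e : {x // x ∈ J} → Fin N := fun x => (x : Fin N) with he
    set A := H.submatrix e e with hA'
    have hA : A.IsHermitian := hH.1.submatrix e
    -- subtype-level inequality
    have hsub : ∀ y : {x // x ∈ J} → ℝ, κ * (∑ i, y i ^ 2) ≤ y ⬝ᵥ A *ᵥ y := by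
      intro y
      have hd : ∀ i, 0 ≤ hA.eigenvalues i - κ := by
        intro i
        have hle : κ ≤ hA.eigenvalues i := by
          rw [hκ]
          exact csInf_le (Set.finite_range _).bddBelow ⟨i, rfl⟩
        linarith
      have hps : Matrix.PosSemidef ((hA.eigenvectorUnitary : Matrix _ _ ℝ) *
          Matrix.diagonal (fun i => hA.eigenvalues i - κ) *
          (hA.eigenvectorUnitary : Matrix _ _ ℝ)ᴴ) :=
        (Matrix.posSemidef_diagonal_iff.mpr hd).mul_mul_conjTranspose_same _
      have hUU := Matrix.mem_unitaryGroup_iff.mp hA.eigenvectorUnitary.2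
      have hBeq : (hA.eigenvectorUnitary : Matrix _ _ ℝ) *
          Matrix.diagonal (fun i => hA.eigenvalues i - κ) *
          (hA.eigenvectorUnitary : Matrix _ _ ℝ)ᴴ = A - κ • 1 := by
        have hdg : Matrix.diagonal (fun i => hA.eigenvalues i - κ)
            = Matrix.diagonal (RCLike.ofReal ∘ hA.eigenvalues) - κ • 1 := by
          rw [Matrix.smul_one_eq_diagonal, ← Matrix.diagonal_sub]
          rfl
        have hspec := hA.spectral_theorem
        rw [Unitary.conjStarAlgAut_apply] at hspec
        rw [← Matrix.star_eq_conjTranspose, hdg, Matrix.mul_sub, Matrix.sub_mul,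
          ← hspec]
        congr 1
        rw [Matrix.mul_smul, Matrix.smul_mul, Matrix.mul_one, hUU]
      rw [hBeq] at hps
      have hps2 := hps.dotProduct_mulVec_nonneg y
      simp only [star_trivial, Matrix.sub_mulVec, dotProduct_sub,
        Matrix.smul_mulVec, Matrix.one_mulVec, dotProduct_smul,
        smul_eq_mul] at hps2
      have hyy : y ⬝ᵥ y = ∑ i, y i ^ 2 := by simp [dotProduct, pow_two]
      rw [hyy] at hps2
      linarith
    -- reduce the full sums to `J`
    have h1 : ∑ j, u j ^ 2 = ∑ i : {x // x ∈ J}, u (e i) ^ 2 := by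
      rw [Finset.sum_coe_sort J (fun j => u j ^ 2)]
      exact (Finset.sum_subset (Finset.subset_univ J) fun x _ hx => by
        rw [hu x hx]; ring).symm
    have hinner : ∀ i : Fin N, ∑ j, H i j * u j = ∑ j : {x // x ∈ J}, H i (e j) * u (e j) := by
      intro i
      rw [Finset.sum_coe_sort J (fun j => H i j * u j)]
      exact (Finset.sum_subset (Finset.subset_univ J) fun x _ hx => by
        rw [hu x hx, mul_zero]).symm
    have h2 : u ⬝ᵥ H *ᵥ u
        = (fun i => u (e i)) ⬝ᵥ A *ᵥ (fun i => u (e i)) := by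
      simp only [dotProduct, Matrix.mulVec, hA', Matrix.submatrix_apply]
      rw [Finset.sum_coe_sort J (fun i => u i * ∑ j : {x // x ∈ J}, H i (e j) * u (e j))]
      rw [show (∑ i, u i * ∑ j, H i j * u j)
          = ∑ i, u i * ∑ j : {x // x ∈ J}, H i (e j) * u (e j) from
        Finset.sum_congr rfl fun i _ => by rw [hinner i]]
      exact (Finset.sum_subset (Finset.subset_univ J) fun x _ hx => by
        rw [hu x hx, zero_mul]).symm
    rw [h1, h2]
    exact hsub _
  -- ## key upper bound for elements of the `wH` set
  have hkey : ∀ u : Fin N → ℝ, l2norm Pim (fcomb h u) = 1 →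
      ∑ j, w j * u j ≤ Real.sqrt (∑ j, (w j) ^ 2) / Real.sqrt (κ * (1 - ρ ^ 2)) := by
    intro u hu1
    have hQ1 : u ⬝ᵥ H *ᵥ u = 1 := by
      have h1 : Real.sqrt (u ⬝ᵥ H *ᵥ u) = 1 := by rw [← hnorm]; exact hu1
      have := Real.sq_sqrt (hQnn u)
      rw [h1] at this; simpa using this.symm
    set u₁ : Fin N → ℝ := fun j => if j ∈ J then u j else 0 with hu₁
    set u₂ : Fin N → ℝ := fun j => if j ∈ J then 0 else u j with hu₂
    have hadd : u = u₁ + u₂ := funext fun j => by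
      by_cases hj : j ∈ J <;> simp [hu₁, hu₂, hj]
    have hu₁s : ∀ j, j ∉ J → u₁ j = 0 := fun j hj => by simp [hu₁, hj]
    have hu₂s : ∀ j, j ∈ J → u₂ j = 0 := fun j hj => by simp [hu₂, hj]
    have hexp : (u₁ ⬝ᵥ H *ᵥ u₁) + 2 * (u₁ ⬝ᵥ H *ᵥ u₂) + (u₂ ⬝ᵥ H *ᵥ u₂) = 1 := by
      have hexpand : (u₁ + u₂) ⬝ᵥ H *ᵥ (u₁ + u₂)
          = (u₁ ⬝ᵥ H *ᵥ u₁) + 2 * (u₁ ⬝ᵥ H *ᵥ u₂) + (u₂ ⬝ᵥ H *ᵥ u₂) := by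
        simp only [add_dotProduct, Matrix.mulVec_add, dotProduct_add]
        have h21 := hsym u₂ u₁
        linarith
      rw [← hexpand, ← hadd, hQ1]
    have hcb := hcross u₁ u₂ hu₁s hu₂s
    set n1 := Real.sqrt (u₁ ⬝ᵥ H *ᵥ u₁) with hn1
    set n2 := Real.sqrt (u₂ ⬝ᵥ H *ᵥ u₂) with hn2
    have hq1 : n1 ^ 2 = u₁ ⬝ᵥ H *ᵥ u₁ := Real.sq_sqrt (hQnn u₁)
    have hq2 : n2 ^ 2 = u₂ ⬝ᵥ H *ᵥ u₂ := Real.sq_sqrt (hQnn u₂)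
    have h1r : (1 - ρ ^ 2) * (u₁ ⬝ᵥ H *ᵥ u₁) ≤ 1 := by
      nlinarith [sq_nonneg (n2 - ρ * n1)]
    have h2r : κ * (∑ j, u₁ j ^ 2) ≤ u₁ ⬝ᵥ H *ᵥ u₁ := heig u₁ hu₁s
    have hsum1 : ∑ j, u₁ j ^ 2 ≤ 1 / (κ * (1 - ρ ^ 2)) := by
      rw [le_div_iff₀ hCq]
      nlinarith
    have hwu : ∑ j, w j * u j = ∑ j, w j * u₁ j := by
      refine Finset.sum_congr rfl fun j _ => ?_
      by_cases hj : j ∈ J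
      · simp [hu₁, hj]
      · have hwj : w j = 0 := by
          by_contra hw
          exact hj ((hJ j).mp hw)
        simp [hwj]
    calc ∑ j, w j * u j = ∑ j, w j * u₁ j := hwu
      _ ≤ Real.sqrt (∑ j, (w j) ^ 2) * Real.sqrt (∑ j, u₁ j ^ 2) :=
          Real.sum_mul_le_sqrt_mul_sqrt univ _ _
      _ ≤ Real.sqrt (∑ j, (w j) ^ 2) * Real.sqrt (1 / (κ * (1 - ρ ^ 2))) :=
          mul_le_mul_of_nonneg_left (Real.sqrt_le_sqrt hsum1) (Real.sqrt_nonneg _)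
      _ = Real.sqrt (∑ j, (w j) ^ 2) / Real.sqrt (κ * (1 - ρ ^ 2)) := by
          rw [one_div, Real.sqrt_inv, div_eq_mul_inv]
  have hbnd0 : (0:ℝ) ≤ Real.sqrt (∑ j, (w j) ^ 2) / Real.sqrt (κ * (1 - ρ ^ 2)) :=
    div_nonneg (Real.sqrt_nonneg _) (Real.sqrt_nonneg _)
  -- ## the `wH` set
  have hBs_ub : ∀ r ∈ {r | ∃ u : Fin N → ℝ, l2norm Pim (fcomb h u) = 1 ∧ r = ∑ j, w j * u j},
      r ≤ Real.sqrt (∑ j, (w j) ^ 2) / Real.sqrt (κ * (1 - ρ ^ 2)) := by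
    rintro r ⟨u, h1, rfl⟩
    exact hkey u h1
  have hBdd : BddAbove {r | ∃ u : Fin N → ℝ, l2norm Pim (fcomb h u) = 1 ∧ r = ∑ j, w j * u j} :=
    ⟨_, hBs_ub⟩
  have part3 : wH ≤ Real.sqrt (∑ j, (w j) ^ 2) / Real.sqrt (κ * (1 - ρ ^ 2)) := by
    rw [hwH]; exact Real.sSup_le hBs_ub hbnd0
  have hnegmem : ∀ u : Fin N → ℝ, l2norm Pim (fcomb h u) = 1 →
      l2norm Pim (fcomb h (-u)) = 1 := by
    intro u hu
    rw [hnorm] at hu ⊢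
    rwa [neg_dotProduct, Matrix.mulVec_neg, dotProduct_neg, neg_neg]
  have hwH0 : 0 ≤ wH := by
    rcases Set.eq_empty_or_nonempty
      ({r | ∃ u : Fin N → ℝ, l2norm Pim (fcomb h u) = 1 ∧ r = ∑ j, w j * u j} : Set ℝ) with hem | hne
    · rw [hwH, hem, Real.sSup_empty]
    · obtain ⟨r, u, hu1, hru⟩ := hne
      have hmem : r ∈ {r : ℝ | ∃ u : Fin N → ℝ, l2norm Pim (fcomb h u) = 1 ∧ r = ∑ j, w j * u j} :=
        ⟨u, hu1, hru⟩
      have hmem' : -r ∈ {r | ∃ u : Fin N → ℝ, l2norm Pim (fcomb h u) = 1 ∧ r = ∑ j, w j * u j} := by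
        refine ⟨-u, hnegmem u hu1, ?_⟩
        rw [hru]
        simp [Finset.sum_neg_distrib]
      have h1 := le_csSup hBdd hmem
      have h2 := le_csSup hBdd hmem'
      rw [← hwH] at h1 h2
      linarith
  have part1 : alignCoef Pim h lam w ≤ wH := by
    rw [alignCoef]
    refine Real.sSup_le ?_ hwH0
    rintro x ⟨u, -, h1, h2⟩
    rw [hwH]
    exact le_csSup hBdd ⟨u, h1, h2⟩
  -- ## part 2
  have part2 : IsUnit H.det →
      wH = Real.sqrt (∑ j, ((((posSemidefSqrt hH)⁻¹).mulVec w) j) ^ 2) := by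
    intro hdet
    set a : Fin N → ℝ := ((posSemidefSqrt hH)⁻¹).mulVec w with ha
    have hdetR : IsUnit (posSemidefSqrt hH).det := by
      have hdd : (posSemidefSqrt hH).det * (posSemidefSqrt hH).det = H.det := by
        rw [← Matrix.det_mul, posSemidefSqrt_mul_self hH]
      rw [← hdd] at hdet
      exact isUnit_of_mul_isUnit_left hdet
    have hRi : (posSemidefSqrt hH) * (posSemidefSqrt hH)⁻¹ = 1 := Matrix.mul_nonsing_inv _ hdetR
    have hwa : (posSemidefSqrt hH) *ᵥ a = w := by
      rw [ha, show ((posSemidefSqrt hH)⁻¹).mulVec w = (posSemidefSqrt hH)⁻¹ *ᵥ w from rfl,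
        Matrix.mulVec_mulVec, hRi, Matrix.one_mulVec]
    set na := Real.sqrt (∑ j, a j ^ 2) with hna
    have hna0 : 0 ≤ na := Real.sqrt_nonneg _
    have hnasq : na ^ 2 = ∑ j, a j ^ 2 :=
      Real.sq_sqrt (Finset.sum_nonneg fun j _ => sq_nonneg _)
    -- upper bound
    have hup : ∀ r ∈ {r | ∃ u : Fin N → ℝ, l2norm Pim (fcomb h u) = 1 ∧ r = ∑ j, w j * u j},
        r ≤ na := by
      rintro r ⟨u, h1, rfl⟩
      have hQ1 : ((posSemidefSqrt hH) *ᵥ u) ⬝ᵥ ((posSemidefSqrt hH) *ᵥ u) = 1 := by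
        rw [← hRdot]
        have hs1 : Real.sqrt (u ⬝ᵥ H *ᵥ u) = 1 := by rw [← hnorm]; exact h1
        have := Real.sq_sqrt (hQnn u)
        rw [hs1] at this; simpa using this.symm
      have hdot : ∑ j, w j * u j = a ⬝ᵥ ((posSemidefSqrt hH) *ᵥ u) := by
        rw [Matrix.dotProduct_mulVec, ← Matrix.mulVec_transpose, hsymR, hwa]
        rfl
      rw [hdot]
      calc a ⬝ᵥ ((posSemidefSqrt hH) *ᵥ u) = ∑ j, a j * ((posSemidefSqrt hH) *ᵥ u) j := rfl
        _ ≤ Real.sqrt (∑ j, a j ^ 2) * Real.sqrt (∑ j, (((posSemidefSqrt hH) *ᵥ u) j) ^ 2) :=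
            Real.sum_mul_le_sqrt_mul_sqrt univ _ _
        _ = na * Real.sqrt (((posSemidefSqrt hH) *ᵥ u) ⬝ᵥ ((posSemidefSqrt hH) *ᵥ u)) := by rw [hna, hsq]
        _ = na := by rw [hQ1, Real.sqrt_one, mul_one]
    rcases isEmpty_or_nonempty (Fin N) with hemp | hne
    · have hem : {r | ∃ u : Fin N → ℝ, l2norm Pim (fcomb h u) = 1 ∧ r = ∑ j, w j * u j} = ∅ := by
        ext r
        simp only [Set.mem_setOf_eq, Set.mem_empty_iff_false, iff_false, not_exists]
        rintro u ⟨h1, -⟩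
        rw [hnorm] at h1
        have : u ⬝ᵥ H *ᵥ u = 0 := by simp [dotProduct]
        rw [this, Real.sqrt_zero] at h1
        exact one_ne_zero h1.symm
      rw [hwH, hem, Real.sSup_empty, hna]
      simp
    · -- construct an element attaining `na`
      obtain ⟨i0⟩ := hne
      have hmem : na ∈ {r | ∃ u : Fin N → ℝ,
          l2norm Pim (fcomb h u) = 1 ∧ r = ∑ j, w j * u j} := by
        by_cases haz : a = 0
        · have hw0 : w = 0 := by rw [← hwa, haz, Matrix.mulVec_zero]
          refine ⟨(posSemidefSqrt hH)⁻¹ *ᵥ (Pi.single i0 1), ?_, ?_⟩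
          · rw [hnorm, hRdot, Matrix.mulVec_mulVec, hRi, Matrix.one_mulVec]
            have : (Pi.single i0 (1:ℝ)) ⬝ᵥ (Pi.single i0 1) = 1 := by
              simp [dotProduct, Pi.single_apply]
            rw [this, Real.sqrt_one]
          · rw [hna, haz, hw0]
            simp
        · have hsumpos : 0 < ∑ j, a j ^ 2 := by
            obtain ⟨j0, hj0⟩ := Function.ne_iff.mp haz
            refine Finset.sum_pos' (fun j _ => sq_nonneg _) ⟨j0, Finset.mem_univ _, ?_⟩
            exact pow_two_pos_of_ne_zero hj0
          have hnapos : 0 < na := Real.sqrt_pos.mpr hsumpos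
          refine ⟨(posSemidefSqrt hH)⁻¹ *ᵥ (na⁻¹ • a), ?_, ?_⟩
          · rw [hnorm, hRdot, Matrix.mulVec_mulVec, hRi, Matrix.one_mulVec]
            have : (na⁻¹ • a) ⬝ᵥ (na⁻¹ • a) = 1 := by
              rw [hsq]
              have : ∑ i, (na⁻¹ • a) i ^ 2 = na⁻¹ ^ 2 * ∑ i, a i ^ 2 := by
                rw [Finset.mul_sum]
                exact Finset.sum_congr rfl fun i _ => by
                  simp [Pi.smul_apply, smul_eq_mul]; ring
              rw [this, ← hnasq]
              field_simp
            rw [this, Real.sqrt_one]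
          · have hdot : ∑ j, w j * ((posSemidefSqrt hH)⁻¹ *ᵥ (na⁻¹ • a)) j
                = a ⬝ᵥ ((posSemidefSqrt hH) *ᵥ ((posSemidefSqrt hH)⁻¹ *ᵥ (na⁻¹ • a))) := by
              rw [Matrix.dotProduct_mulVec, ← Matrix.mulVec_transpose, hsymR, hwa]
              rfl
            rw [hdot, Matrix.mulVec_mulVec, hRi, Matrix.one_mulVec]
            have : a ⬝ᵥ (na⁻¹ • a) = na⁻¹ * ∑ j, a j ^ 2 := by
              rw [Finset.mul_sum]
              simp only [dotProduct, Pi.smul_apply, smul_eq_mul]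
              exact Finset.sum_congr rfl fun i _ => by ring
            rw [this, ← hnasq]
            field_simp
      have hle : wH ≤ na := by rw [hwH]; exact Real.sSup_le hup hna0
      have hge : na ≤ wH := by rw [hwH]; exact le_csSup ⟨na, hup⟩ hmem
      rw [hna] at hle hge ⊢
      linarith
  -- ## part 4
  have part4 : Real.sqrt (∑ j, (w j) ^ 2) / Real.sqrt (κ * (1 - ρ ^ 2)) ≤
      (sSup (Set.range fun j => |w j|)) * Real.sqrt (J.card : ℝ)
        / Real.sqrt (κ * (1 - ρ ^ 2)) := by
    have hden : 0 < Real.sqrt (κ * (1 - ρ ^ 2)) := Real.sqrt_pos.mpr hCq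
    rcases J.eq_empty_or_nonempty with hJe | ⟨j0, hj0⟩
    · have hw0 : ∀ j, w j = 0 := by
        intro j
        by_contra hw
        have := (hJ j).mp hw
        rw [hJe] at this
        exact absurd this (Finset.notMem_empty j)
      have : ∑ j, (w j) ^ 2 = 0 := Finset.sum_eq_zero fun j _ => by rw [hw0 j]; ring
      rw [this, Real.sqrt_zero, zero_div]
      refine div_nonneg (mul_nonneg ?_ (Real.sqrt_nonneg _)) (Real.sqrt_nonneg _)
      rcases isEmpty_or_nonempty (Fin N) with he | hn
      · rw [show (Set.range fun j : Fin N => |w j|) = ∅ from Set.range_eq_empty _,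
          Real.sSup_empty]
      · obtain ⟨i0⟩ := hn
        have hb : BddAbove (Set.range fun j : Fin N => |w j|) :=
          (Set.finite_range _).bddAbove
        exact le_trans (abs_nonneg (w i0)) (le_csSup hb ⟨i0, rfl⟩)
    · set M := sSup (Set.range fun j => |w j|) with hM
      have hb : BddAbove (Set.range fun j : Fin N => |w j|) :=
        (Set.finite_range _).bddAbove
      have hM0 : 0 ≤ M := le_trans (abs_nonneg (w j0)) (le_csSup hb ⟨j0, rfl⟩)
      have hMle : ∀ j, |w j| ≤ M := fun j => le_csSup hb ⟨j, rfl⟩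
      have hnum : Real.sqrt (∑ j, (w j) ^ 2) ≤ M * Real.sqrt (J.card : ℝ) := by
        have h1 : ∑ j, (w j) ^ 2 = ∑ j ∈ J, (w j) ^ 2 := by
          refine (Finset.sum_subset (Finset.subset_univ J) fun x _ hx => ?_).symm
          have hwj : w x = 0 := by
            by_contra hw
            exact hx ((hJ x).mp hw)
          rw [hwj]; ring
        have h2 : ∑ j ∈ J, (w j) ^ 2 ≤ (J.card : ℝ) * M ^ 2 := by
          calc ∑ j ∈ J, (w j) ^ 2 ≤ ∑ _j ∈ J, M ^ 2 := by
                refine Finset.sum_le_sum fun j _ => ?_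
                have := hMle j
                nlinarith [abs_nonneg (w j), sq_abs (w j)]
            _ = (J.card : ℝ) * M ^ 2 := by rw [Finset.sum_const, nsmul_eq_mul]
        calc Real.sqrt (∑ j, (w j) ^ 2) ≤ Real.sqrt ((J.card : ℝ) * M ^ 2) := by
              rw [h1]; exact Real.sqrt_le_sqrt h2
          _ = Real.sqrt (J.card : ℝ) * M := by
              rw [Real.sqrt_mul (Nat.cast_nonneg _), Real.sqrt_sq hM0]
          _ = M * Real.sqrt (J.card : ℝ) := mul_comm _ _
      exact div_le_div_of_nonneg_right hnum hden.le |>.trans_eq rfl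
  exact ⟨part1, part2, part3, part4⟩

end EntropySparse
end
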